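/- arXiv:0906.0139 — 6 statements merged into one kernel-verified Lean document; each statement's English description precedes it below -/
import Mathlib

section
/- The set of orthogonal projections in the 2n×2n complex matrices whose diagonal entries are all equal to 1/2 is path-connected. -/
open Complex Matrix Finset

set_option maxHeartbeats 1000000

namespace ProjHalf

variable {N : ℕ}

abbrev Mat (N : ℕ) := Matrix (Fin N) (Fin N) ℂ

def Zset (N : ℕ) : Set (Mat N) :=
  {A | A.conjTranspose = A ∧ A * A = 1 ∧ ∀ i, A i i = 0}

lemma herm_entry {A : Mat N} (h : A ∈ Zset N) (p q : Fin N) :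
    A p q = star (A q p) := by
  conv_lhs => rw [← h.1]
  rw [Matrix.conjTranspose_apply]

/-- conjugating by a continuous unitary path that preserves the zero diagonal
stays in `Zset`. -/
lemma joined_conj {A : Mat N} (hA : A ∈ Zset N)
    (u : ℝ → Mat N) (hu0 : u 0 = 1) (hcont : Continuous u)
    (hunit : ∀ t : ℝ, u t * (u t)ᴴ = 1)
    (hdiag : ∀ t : ℝ, ∀ i, (u t * A * (u t)ᴴ) i i = 0) :
    JoinedIn (Zset N) A (u 1 * A * (u 1)ᴴ) := by
  have hmem : ∀ t : ℝ, u t * A * (u t)ᴴ ∈ Zset N := by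
    intro t
    have h1 : (u t)ᴴ * u t = 1 := mul_eq_one_comm.mp (hunit t)
    refine ⟨?_, ?_, hdiag t⟩
    · calc (u t * A * (u t)ᴴ)ᴴ = u t * Aᴴ * (u t)ᴴ := by
            simp [Matrix.conjTranspose_mul, Matrix.mul_assoc]
      _ = u t * A * (u t)ᴴ := by rw [hA.1]
    · calc (u t * A * (u t)ᴴ) * (u t * A * (u t)ᴴ)
          = u t * (A * ((u t)ᴴ * u t) * A) * (u t)ᴴ := by
            simp only [Matrix.mul_assoc]
        _ = 1 := by rw [h1, Matrix.mul_one, Matrix.mul_assoc, hA.2.1, Matrix.one_mul, hunit t]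
  have hc : Continuous fun t : ℝ => u t * A * (u t)ᴴ :=
    (hcont.matrix_mul continuous_const).matrix_mul hcont.matrix_conjTranspose
  refine ⟨⟨⟨fun s => u s.1 * A * (u s.1)ᴴ, hc.comp continuous_subtype_val⟩, ?_, ?_⟩, ?_⟩
  · simp [hu0]
  · simp
  · intro t; exact hmem t.1

/-! ### diagonal phase move -/

noncomputable def dphase (k : Fin N) (α : ℝ) : Mat N :=
  Matrix.diagonal (fun p => if p = k then Complex.exp (α * Complex.I) else 1)

lemma dphase_conj_apply (k : Fin N) (α : ℝ) (A : Mat N) (p q : Fin N) :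
    (dphase k α * A * (dphase k α)ᴴ) p q =
      (if p = k then Complex.exp (α * Complex.I) else 1) * A p q *
        star (if q = k then Complex.exp (α * Complex.I) else 1) := by
  rw [dphase, Matrix.diagonal_conjTranspose, Matrix.mul_diagonal, Matrix.diagonal_mul,
    Pi.star_apply]

lemma star_phase (α : ℝ) :
    star (Complex.exp (α * Complex.I)) = Complex.exp (-(α * Complex.I)) := by
  rw [Complex.star_def, ← Complex.exp_conj]
  congr 1
  simp

lemma phase_mul_star_self (α : ℝ) :
    Complex.exp (α * Complex.I) * (starRingEnd ℂ) (Complex.exp (α * Complex.I)) = 1 := by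
  rw [Complex.mul_conj]
  norm_cast
  simp [Complex.normSq_eq_norm_sq, Complex.norm_exp_ofReal_mul_I]

lemma dphase_zero (k : Fin N) : dphase k (0:ℝ) = 1 := by
  ext p q
  rw [dphase, Matrix.diagonal_apply, Matrix.one_apply]
  by_cases h : p = q
  · subst h; simp
  · simp [h]

lemma dphase_unitary (k : Fin N) (α : ℝ) : dphase k α * (dphase k α)ᴴ = 1 := by
  rw [dphase, Matrix.diagonal_conjTranspose, Matrix.diagonal_mul_diagonal]
  ext p q
  rw [Matrix.diagonal_apply, Matrix.one_apply]
  by_cases h : p = q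
  · subst h
    by_cases hk : p = k <;> simp [hk, phase_mul_star_self]
  · simp [h]

lemma dphase_continuous (k : Fin N) (α : ℝ) :
    Continuous fun t : ℝ => dphase k (t * α) := by
  refine Continuous.matrix_diagonal ?_
  apply continuous_pi
  intro p
  by_cases hp : p = k
  · simp only [hp, if_true]
    exact Complex.continuous_exp.comp (by fun_prop)
  · simp only [if_neg hp]; exact continuous_const

lemma phase_move {A : Mat N} (hA : A ∈ Zset N) (k : Fin N) (α : ℝ) :
    JoinedIn (Zset N) A (dphase k α * A * (dphase k α)ᴴ) := by
  have h := joined_conj hA (fun t => dphase k (t * α)) (by simp [dphase_zero])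
    (dphase_continuous k α) (fun t => dphase_unitary k _)
    (by
      intro t i
      rw [dphase_conj_apply, hA.2.2 i]
      ring)
  simpa using h
/-! ### plane rotation move -/

noncomputable def rot (i j : Fin N) (θ : ℝ) : Mat N := fun p q =>
  if p = i then (if q = i then (Real.cos θ : ℂ) else if q = j then (-(Real.sin θ) : ℂ) else 0)
  else if p = j then (if q = i then (Real.sin θ : ℂ) else if q = j then (Real.cos θ : ℂ) else 0)
  else if p = q then 1 else 0

lemma sum_two_point {i j : Fin N} (hij : i ≠ j) (a b : ℂ) (f : Fin N → ℂ) :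
    (∑ r, (if r = i then a else if r = j then b else 0) * f r) = a * f i + b * f j := by
  have key : ∀ r : Fin N, (if r = i then a else if r = j then b else 0) * f r
      = (if i = r then a * f r else 0) + (if j = r then b * f r else 0) := by
    intro r
    by_cases h1 : r = i
    · simp [h1, hij.symm, Ne.symm hij]
    · by_cases h2 : r = j
      · simp [h1, h2, hij, Ne.symm hij]
      · simp [h1, h2, Ne.symm h1, Ne.symm h2]
  rw [Finset.sum_congr rfl (fun r _ => key r), Finset.sum_add_distrib,
    Finset.sum_ite_eq, Finset.sum_ite_eq]
  simp

lemma sum_delta_mul (p : Fin N) (f : Fin N → ℂ) :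
    (∑ r, (if p = r then (1:ℂ) else 0) * f r) = f p := by
  rw [Finset.sum_congr rfl (fun r _ => by rw [ite_mul, one_mul, zero_mul]),
    Finset.sum_ite_eq]
  simp

lemma rot_row_i {i j : Fin N} (θ : ℝ) (r : Fin N) :
    rot i j θ i r = (if r = i then (Real.cos θ:ℂ) else if r = j then (-(Real.sin θ):ℂ) else 0) := by
  simp [rot]

lemma rot_row_j {i j : Fin N} (hij : i ≠ j) (θ : ℝ) (r : Fin N) :
    rot i j θ j r = (if r = i then (Real.sin θ:ℂ) else if r = j then ((Real.cos θ):ℂ) else 0) := by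
  rw [rot, if_neg (Ne.symm hij), if_pos rfl]

lemma rot_row_out {i j p : Fin N} (hp : p ≠ i) (hp2 : p ≠ j) (θ : ℝ) (r : Fin N) :
    rot i j θ p r = (if p = r then 1 else 0) := by
  rw [rot, if_neg hp, if_neg hp2]

lemma rot_star_entry {i j : Fin N} (θ : ℝ) (p q : Fin N) :
    star (rot i j θ p q) = rot i j θ p q := by
  rw [rot]
  split_ifs <;>
  simp only [star_zero, star_one, star_neg, Complex.star_def, Complex.conj_ofReal]

lemma rot_mul_apply {i j : Fin N} (hij : i ≠ j) (θ : ℝ) (A : Mat N) (p q : Fin N) :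
    (rot i j θ * A) p q =
      if p = i then (Real.cos θ : ℂ) * A i q - (Real.sin θ : ℂ) * A j q
      else if p = j then (Real.sin θ : ℂ) * A i q + (Real.cos θ : ℂ) * A j q
      else A p q := by
  rw [Matrix.mul_apply]
  by_cases hp : p = i
  · rw [Finset.sum_congr rfl (fun r _ => by rw [hp, rot_row_i θ r]),
      sum_two_point hij _ _ (fun r => A r q), if_pos hp]
    ring
  · by_cases hp2 : p = j
    · rw [Finset.sum_congr rfl (fun r _ => by rw [hp2, rot_row_j hij θ r]),
        sum_two_point hij _ _ (fun r => A r q), if_neg hp, if_pos hp2]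
    · rw [Finset.sum_congr rfl (fun r _ => by rw [rot_row_out hp hp2 θ r]),
        sum_delta_mul p (fun r => A r q), if_neg hp, if_neg hp2]

lemma mul_rotH_apply {i j : Fin N} (hij : i ≠ j) (θ : ℝ) (B : Mat N) (p q : Fin N) :
    (B * (rot i j θ)ᴴ) p q =
      if q = i then (Real.cos θ : ℂ) * B p i - (Real.sin θ : ℂ) * B p j
      else if q = j then (Real.sin θ : ℂ) * B p i + (Real.cos θ : ℂ) * B p j
      else B p q := by
  rw [Matrix.mul_apply]
  have hrw : ∀ x, B p x * (rot i j θ)ᴴ x q = rot i j θ q x * B p x := by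
    intro x
    rw [Matrix.conjTranspose_apply, rot_star_entry, mul_comm]
  rw [Finset.sum_congr rfl (fun x _ => hrw x)]
  by_cases hq : q = i
  · rw [Finset.sum_congr rfl (fun r _ => by rw [hq, rot_row_i θ r]),
      sum_two_point hij _ _ (fun r => B p r), if_pos hq]
    ring
  · by_cases hq2 : q = j
    · rw [Finset.sum_congr rfl (fun r _ => by rw [hq2, rot_row_j hij θ r]),
        sum_two_point hij _ _ (fun r => B p r), if_neg hq, if_pos hq2]
    · rw [Finset.sum_congr rfl (fun r _ => by rw [rot_row_out hq hq2 θ r]),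
        sum_delta_mul q (fun r => B p r), if_neg hq, if_neg hq2]
lemma rotc_out_out {i j : Fin N} (hij : i ≠ j) (θ : ℝ) (A : Mat N) {p q : Fin N}
    (hpi : p ≠ i) (hpj : p ≠ j) (hqi : q ≠ i) (hqj : q ≠ j) :
    (rot i j θ * A * (rot i j θ)ᴴ) p q = A p q := by
  rw [mul_rotH_apply hij, if_neg hqi, if_neg hqj, rot_mul_apply hij, if_neg hpi, if_neg hpj]

lemma rotc_out_i {i j : Fin N} (hij : i ≠ j) (θ : ℝ) (A : Mat N) {p : Fin N}
    (hpi : p ≠ i) (hpj : p ≠ j) :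
    (rot i j θ * A * (rot i j θ)ᴴ) p i =
      (Real.cos θ : ℂ) * A p i - (Real.sin θ : ℂ) * A p j := by
  rw [mul_rotH_apply hij, if_pos rfl, rot_mul_apply hij, if_neg hpi, if_neg hpj,
    rot_mul_apply hij, if_neg hpi, if_neg hpj]

lemma rotc_out_j {i j : Fin N} (hij : i ≠ j) (θ : ℝ) (A : Mat N) {p : Fin N}
    (hpi : p ≠ i) (hpj : p ≠ j) :
    (rot i j θ * A * (rot i j θ)ᴴ) p j =
      (Real.sin θ : ℂ) * A p i + (Real.cos θ : ℂ) * A p j := by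
  rw [mul_rotH_apply hij, if_neg (Ne.symm hij), if_pos rfl, rot_mul_apply hij,
    if_neg hpi, if_neg hpj, rot_mul_apply hij, if_neg hpi, if_neg hpj]

lemma rotc_i_out {i j : Fin N} (hij : i ≠ j) (θ : ℝ) (A : Mat N) {q : Fin N}
    (hqi : q ≠ i) (hqj : q ≠ j) :
    (rot i j θ * A * (rot i j θ)ᴴ) i q =
      (Real.cos θ : ℂ) * A i q - (Real.sin θ : ℂ) * A j q := by
  rw [mul_rotH_apply hij, if_neg hqi, if_neg hqj, rot_mul_apply hij, if_pos rfl]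

lemma rotc_j_out {i j : Fin N} (hij : i ≠ j) (θ : ℝ) (A : Mat N) {q : Fin N}
    (hqi : q ≠ i) (hqj : q ≠ j) :
    (rot i j θ * A * (rot i j θ)ᴴ) j q =
      (Real.sin θ : ℂ) * A i q + (Real.cos θ : ℂ) * A j q := by
  rw [mul_rotH_apply hij, if_neg hqi, if_neg hqj, rot_mul_apply hij,
    if_neg (Ne.symm hij), if_pos rfl]

lemma rotc_ii {i j : Fin N} (hij : i ≠ j) (θ : ℝ) (A : Mat N) :
    (rot i j θ * A * (rot i j θ)ᴴ) i i =
      (Real.cos θ : ℂ) * ((Real.cos θ : ℂ) * A i i - (Real.sin θ : ℂ) * A j i)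
      - (Real.sin θ : ℂ) * ((Real.cos θ : ℂ) * A i j - (Real.sin θ : ℂ) * A j j) := by
  rw [mul_rotH_apply hij, if_pos rfl, rot_mul_apply hij, if_pos rfl,
    rot_mul_apply hij, if_pos rfl]

lemma rotc_jj {i j : Fin N} (hij : i ≠ j) (θ : ℝ) (A : Mat N) :
    (rot i j θ * A * (rot i j θ)ᴴ) j j =
      (Real.sin θ : ℂ) * ((Real.sin θ : ℂ) * A i i + (Real.cos θ : ℂ) * A j i)
      + (Real.cos θ : ℂ) * ((Real.sin θ : ℂ) * A i j + (Real.cos θ : ℂ) * A j j) := by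
  rw [mul_rotH_apply hij, if_neg (Ne.symm hij), if_pos rfl, rot_mul_apply hij,
    if_neg (Ne.symm hij), if_pos rfl, rot_mul_apply hij, if_neg (Ne.symm hij), if_pos rfl]

lemma rot_zero (i j : Fin N) : rot i j (0:ℝ) = 1 := by
  ext p q
  rw [rot, Matrix.one_apply]
  split_ifs <;> simp_all

lemma rot_unitary {i j : Fin N} (hij : i ≠ j) (θ : ℝ) :
    rot i j θ * (rot i j θ)ᴴ = 1 := by
  have h : (Real.sin θ : ℂ)^2 + (Real.cos θ : ℂ)^2 = 1 := by
    exact_mod_cast congrArg (Complex.ofReal) (Real.sin_sq_add_cos_sq θ)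
  ext p q
  rw [mul_rotH_apply hij, Matrix.one_apply]
  simp only [rot]
  split_ifs <;> (try rfl) <;> (try ring) <;> (try linear_combination h) <;>
    (try linear_combination -h) <;> simp_all

lemma rot_continuous (i j : Fin N) (θ : ℝ) :
    Continuous fun t : ℝ => rot i j (t * θ) := by
  apply continuous_pi
  intro p
  apply continuous_pi
  intro q
  unfold rot
  split_ifs <;> fun_prop

lemma rot_move {A : Mat N} (hA : A ∈ Zset N) {i j : Fin N} (hij : i ≠ j)
    (hre : (A i j).re = 0) (θ : ℝ) :
    JoinedIn (Zset N) A (rot i j θ * A * (rot i j θ)ᴴ) := by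
  have hdiag : ∀ φ : ℝ, ∀ m, (rot i j φ * A * (rot i j φ)ᴴ) m m = 0 := by
    intro φ m
    have hsum : A i j + (starRingEnd ℂ) (A i j) = 0 := by
      rw [Complex.add_conj, hre]
      simp
    have hji : A j i = (starRingEnd ℂ) (A i j) := by
      rw [herm_entry hA j i, Complex.star_def]
    by_cases hm : m = i
    · subst hm
      rw [rotc_ii hij, hA.2.2 m, hA.2.2 j, hji]
      linear_combination (-(Real.cos φ : ℂ) * (Real.sin φ : ℂ)) * hsum
    · by_cases hm2 : m = j
      · subst hm2
        rw [rotc_jj hij, hA.2.2 i, hA.2.2 m, hji]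
        linear_combination ((Real.cos φ : ℂ) * (Real.sin φ : ℂ)) * hsum
      · rw [rotc_out_out hij φ A hm hm2 hm hm2, hA.2.2 m]
  have h := joined_conj hA (fun t => rot i j (t * θ)) (by simp [rot_zero])
    (rot_continuous i j θ) (fun t => rot_unitary hij _) (fun t m => hdiag _ m)
  simpa using h

/-! ### support bookkeeping -/

def SuppW (u : Mat N) (W : Finset (Fin N)) : Prop :=
  ∀ p q, (p ∉ W ∨ q ∉ W) → u p q = if p = q then 1 else 0

lemma suppW_mono {u : Mat N} {W W' : Finset (Fin N)} (hWW : W ⊆ W')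
    (h : SuppW u W) : SuppW u W' := by
  intro p q hpq
  apply h
  rcases hpq with h1 | h1
  · exact Or.inl (fun hc => h1 (hWW hc))
  · exact Or.inr (fun hc => h1 (hWW hc))

lemma sum_mul_star_delta (q : Fin N) (f : Fin N → ℂ) :
    (∑ s, f s * star (if q = s then (1:ℂ) else 0)) = f q := by
  have key : ∀ s, f s * star (if q = s then (1:ℂ) else 0) = (if q = s then f s else 0) := by
    intro s
    by_cases h : q = s <;> simp [h]
  rw [Finset.sum_congr rfl (fun s _ => key s), Finset.sum_ite_eq]
  simp

lemma sum_mul_delta2 (q : Fin N) (f : Fin N → ℂ) :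
    (∑ s, f s * (if q = s then (1:ℂ) else 0)) = f q := by
  have key : ∀ s, f s * (if q = s then (1:ℂ) else 0) = (if q = s then f s else 0) := by
    intro s
    by_cases h : q = s <;> simp [h]
  rw [Finset.sum_congr rfl (fun s _ => key s), Finset.sum_ite_eq]
  simp

lemma sum_mul_delta3 (q : Fin N) (f : Fin N → ℂ) :
    (∑ s, f s * (if s = q then (1:ℂ) else 0)) = f q := by
  have key : ∀ s, f s * (if s = q then (1:ℂ) else 0) = (if q = s then f s else 0) := by
    intro s
    by_cases h : s = q
    · simp [h]
    · rw [if_neg h, if_neg (fun h2 : q = s => h h2.symm), mul_zero]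
  rw [Finset.sum_congr rfl (fun s _ => key s), Finset.sum_ite_eq]
  simp

lemma suppW_mul {u v : Mat N} {W : Finset (Fin N)} (hu : SuppW u W) (hv : SuppW v W) :
    SuppW (u * v) W := by
  intro p q hpq
  rw [Matrix.mul_apply]
  rcases hpq with h1 | h1
  · rw [Finset.sum_congr rfl (fun r _ => by rw [hu p r (Or.inl h1)]),
      sum_delta_mul p (fun r => v r q)]
    exact hv p q (Or.inl h1)
  · rw [Finset.sum_congr rfl (fun r _ => by rw [hv r q (Or.inr h1)]),
      sum_mul_delta3 q (fun r => u p r)]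
    exact hu p q (Or.inr h1)

lemma suppW_dphase (k : Fin N) (α : ℝ) : SuppW (dphase k α) {k} := by
  intro p q hpq
  rw [dphase]
  by_cases h : p = q
  · subst h
    rw [Matrix.diagonal_apply_eq, if_pos rfl]
    have hk : p ≠ k := by
      rcases hpq with h1 | h1 <;> simpa using h1
    rw [if_neg hk]
  · rw [Matrix.diagonal_apply_ne _ h, if_neg h]

lemma suppW_rot (i j : Fin N) (θ : ℝ) : SuppW (rot i j θ) {i, j} := by
  intro p q hpq
  have hp : (p ≠ i ∧ p ≠ j) ∨ (q ≠ i ∧ q ≠ j) := by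
    rcases hpq with h1 | h1
    · left; constructor <;> (intro hc; apply h1; simp [hc])
    · right; constructor <;> (intro hc; apply h1; simp [hc])
  rcases hp with ⟨h1, h2⟩ | ⟨h1, h2⟩
  · exact rot_row_out h1 h2 θ q
  · rw [rot]
    by_cases hpi : p = i
    · rw [if_pos hpi, if_neg h1, if_neg h2, if_neg (by rw [hpi]; exact Ne.symm h1)]
    · by_cases hpj : p = j
      · rw [if_neg hpi, if_pos hpj, if_neg h1, if_neg h2, if_neg (by rw [hpj]; exact Ne.symm h2)]
      · rw [if_neg hpi, if_neg hpj]

lemma suppW_conj_out {u : Mat N} {W : Finset (Fin N)} (hu : SuppW u W) (A : Mat N)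
    {p q : Fin N} (hp : p ∉ W) (hq : q ∉ W) :
    (u * A * uᴴ) p q = A p q := by
  rw [Matrix.mul_apply,
    Finset.sum_congr rfl (fun s _ => by
      rw [Matrix.conjTranspose_apply, hu q s (Or.inl hq)]),
    sum_mul_star_delta q (fun s => (u * A) p s), Matrix.mul_apply,
    Finset.sum_congr rfl (fun r _ => by rw [hu p r (Or.inl hp)]),
    sum_delta_mul p (fun r => A r q)]

lemma suppW_conj_rowzero {u : Mat N} {W : Finset (Fin N)} (hu : SuppW u W) {A : Mat N}
    {p : Fin N} (hp : p ∉ W) (hrow : ∀ s ∈ W, A p s = 0) (q : Fin N) :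
    (u * A * uᴴ) p q = A p q := by
  have hrowu : ∀ s, (u * A) p s = A p s := by
    intro s
    rw [Matrix.mul_apply,
      Finset.sum_congr rfl (fun r _ => by rw [hu p r (Or.inl hp)]),
      sum_delta_mul p (fun r => A r s)]
  rw [Matrix.mul_apply, Finset.sum_congr rfl (fun s _ => by
    rw [Matrix.conjTranspose_apply, hrowu s])]
  by_cases hq : q ∈ W
  · have hz : ∀ s, A p s * star (u q s) = 0 := by
      intro s
      by_cases hs : s ∈ W
      · rw [hrow s hs, zero_mul]
      · rw [hu q s (Or.inr hs), if_neg (fun hc : q = s => hs (hc ▸ hq)), star_zero, mul_zero]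
    rw [Finset.sum_congr rfl (fun s _ => hz s), Finset.sum_const_zero, hrow q hq]
  · rw [Finset.sum_congr rfl (fun s _ => by
      rw [hu q s (Or.inl hq)]),
      sum_mul_star_delta q (fun s => A p s)]

lemma suppW_one (W : Finset (Fin N)) : SuppW (1 : Mat N) W := by
  intro p q _
  rw [Matrix.one_apply]
/-! ### complex helpers -/

lemma star_exp_mul_arg_im (w : ℂ) : (star w * Complex.exp ((w.arg : ℝ) * Complex.I)).im = 0 := by
  by_cases hw : w = 0
  · simp [hw]
  · have h := Complex.norm_mul_exp_arg_mul_I w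
    have h2 : star w * w = (Complex.normSq w : ℂ) := by
      rw [Complex.star_def, mul_comm, Complex.mul_conj]
    have habs : (‖w‖ : ℂ) ≠ 0 := by
      simpa using (norm_ne_zero_iff.mpr hw)
    have key : (‖w‖ : ℂ) * (star w * Complex.exp ((w.arg : ℝ) * Complex.I))
        = (Complex.normSq w : ℂ) := by
      calc (‖w‖ : ℂ) * (star w * Complex.exp ((w.arg : ℝ) * Complex.I))
          = star w * ((‖w‖ : ℂ) * Complex.exp ((w.arg : ℝ) * Complex.I)) := by ring
        _ = star w * w := by rw [h]
        _ = _ := h2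
    have hthis := congrArg Complex.im key
    simp only [Complex.ofReal_im, Complex.mul_im, Complex.ofReal_re, zero_mul, add_zero] at hthis
    rcases mul_eq_zero.mp hthis with h3 | h3
    · exact absurd h3 (norm_ne_zero_iff.mpr hw)
    · exact h3

lemma abs_mul_exp_pi2_sub_arg (z : ℂ) :
    (‖z‖ : ℂ) * Complex.exp (((Real.pi/2 - z.arg : ℝ)) * Complex.I) =
      Complex.I * star z := by
  have h1 : Complex.exp (((Real.pi/2 - z.arg : ℝ)) * Complex.I)
      = Complex.exp ((Real.pi/2 : ℝ) * Complex.I) * Complex.exp ((-z.arg : ℝ) * Complex.I) := by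
    rw [← Complex.exp_add]
    congr 1
    push_cast
    ring
  have h2 : Complex.exp ((Real.pi/2 : ℝ) * Complex.I) = Complex.I := by
    rw [Complex.exp_mul_I, ← Complex.ofReal_cos, ← Complex.ofReal_sin,
      Real.cos_pi_div_two, Real.sin_pi_div_two]
    norm_num
  have h3 : (‖z‖ : ℂ) * Complex.exp ((-z.arg : ℝ) * Complex.I) = star z := by
    have h := congrArg star (Complex.norm_mul_exp_arg_mul_I z)
    rw [star_mul', star_phase] at h
    rw [show ((-z.arg : ℝ) : ℂ) * Complex.I = -((z.arg:ℝ) * Complex.I) by push_cast; ring]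
    rw [← h]
    rw [show star ((‖z‖ : ℝ) : ℂ) = ((‖z‖ : ℝ) : ℂ) by
      rw [Complex.star_def, Complex.conj_ofReal]]
  rw [h1, h2]
  linear_combination Complex.I * h3

lemma exists_angle {x y : ℂ} (him : (y * star x).im = 0) :
    ∃ θ : ℝ, (Real.sin θ : ℂ) * x + (Real.cos θ : ℂ) * y = 0 := by
  by_cases hx : x = 0
  · refine ⟨Real.pi/2, ?_⟩
    rw [hx, Real.cos_pi_div_two]
    simp
  · set t : ℝ := (y * star x).re / Complex.normSq x with ht
    have hnsq : (Complex.normSq x : ℝ) ≠ 0 := (Complex.normSq_pos.mpr hx).ne'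
    have hnsqC : ((Complex.normSq x : ℝ) : ℂ) ≠ 0 := by
      exact_mod_cast hnsq
    have hre : y * star x = ((y * star x).re : ℂ) := by
      apply Complex.ext
      · simp
      · simp only [Complex.ofReal_im]
        exact him
    have hy : y = (t : ℂ) * x := by
      have h1 : y * (star x * x) = ((y * star x).re : ℂ) * x := by
        rw [← mul_assoc, ← hre]
      have h2 : star x * x = (Complex.normSq x : ℂ) := by
        rw [Complex.star_def, mul_comm, Complex.mul_conj]
      rw [h2] at h1
      have h3 : (t : ℂ) = ((y * star x).re : ℂ) / ((Complex.normSq x : ℝ) : ℂ) := by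
        rw [ht]
        push_cast
        ring
      rw [h3, div_mul_eq_mul_div, eq_div_iff hnsqC]
      linear_combination h1
    refine ⟨Real.arctan (-t), ?_⟩
    have hcos : Real.cos (Real.arctan (-t)) ≠ 0 := by
      have := Real.cos_arctan_pos (-t)
      linarith
    have hsin : Real.sin (Real.arctan (-t)) = -t * Real.cos (Real.arctan (-t)) := by
      have h1 : Real.tan (Real.arctan (-t)) = -t := Real.tan_arctan _
      rw [Real.tan_eq_sin_div_cos, div_eq_iff hcos] at h1
      rw [h1]
    rw [hy, hsin]
    push_cast
    ring

lemma ivt_zero {f : ℝ → ℝ} (hf : Continuous f) (h : f 0 * f (Real.pi/2) ≤ 0) :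
    ∃ θ ∈ Set.Icc (0:ℝ) (Real.pi/2), f θ = 0 := by
  have hle : (0:ℝ) ≤ Real.pi/2 := by positivity
  rcases mul_nonpos_iff.mp h with ⟨h1, h2⟩ | ⟨h1, h2⟩
  · have : (0:ℝ) ∈ Set.Icc (f (Real.pi/2)) (f 0) := ⟨h2, h1⟩
    obtain ⟨θ, hθ, hf0⟩ := intermediate_value_Icc' hle hf.continuousOn this
    exact ⟨θ, hθ, hf0⟩
  · have : (0:ℝ) ∈ Set.Icc (f 0) (f (Real.pi/2)) := ⟨h1, h2⟩
    obtain ⟨θ, hθ, hf0⟩ := intermediate_value_Icc hle hf.continuousOn this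
    exact ⟨θ, hθ, hf0⟩

lemma conj_comp (v w A : Mat N) : v * (w * A * wᴴ) * vᴴ = (v * w) * A * (v * w)ᴴ := by
  rw [Matrix.conjTranspose_mul]
  simp only [Matrix.mul_assoc]
/-! ### dphase conj entries -/

lemma dpc_nn {k : Fin N} (α : ℝ) (A : Mat N) {p q : Fin N} (hp : p ≠ k) (hq : q ≠ k) :
    (dphase k α * A * (dphase k α)ᴴ) p q = A p q := by
  rw [dphase_conj_apply, if_neg hp, if_neg hq, one_mul, star_one, mul_one]

lemma dpc_kn {k : Fin N} (α : ℝ) (A : Mat N) {q : Fin N} (hq : q ≠ k) :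
    (dphase k α * A * (dphase k α)ᴴ) k q = Complex.exp (α * Complex.I) * A k q := by
  rw [dphase_conj_apply, if_pos rfl, if_neg hq, star_one, mul_one]

lemma dpc_nk {k : Fin N} (α : ℝ) (A : Mat N) {p : Fin N} (hp : p ≠ k) :
    (dphase k α * A * (dphase k α)ᴴ) p k = A p k * star (Complex.exp (α * Complex.I)) := by
  rw [dphase_conj_apply, if_pos rfl, if_neg hp, one_mul]

lemma re_eq_zero_of_abs_mul {a : ℂ} {z : ℂ} (ha : a ≠ 0)
    (h : (‖a‖ : ℂ) * z = Complex.I * (Complex.normSq a : ℂ)) : z.re = 0 := by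
  have h2 := congrArg Complex.re h
  simp only [Complex.mul_re, Complex.ofReal_re, Complex.ofReal_im, Complex.I_re,
    Complex.I_im, zero_mul, mul_zero, zero_sub, one_mul] at h2
  have habs : ‖a‖ ≠ 0 := norm_ne_zero_iff.mpr ha
  have : ‖a‖ * z.re = 0 := by linarith [h2]
  rcases mul_eq_zero.mp this with h3 | h3
  · exact absurd h3 habs
  · exact h3

lemma im_eq_zero_of_abs_mul {a : ℂ} {w : ℂ} {z : ℂ} (ha : a ≠ 0) (hw : w.re = 0)
    (h : (‖a‖ : ℂ) * z = Complex.I * star w) : z.im = 0 := by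
  have h2 := congrArg Complex.im h
  simp only [Complex.mul_im, Complex.ofReal_re, Complex.ofReal_im, Complex.I_re,
    Complex.I_im, zero_mul, mul_zero, add_zero, one_mul, zero_add,
    Complex.star_def, Complex.conj_re, Complex.conj_im, hw] at h2
  have habs : ‖a‖ ≠ 0 := norm_ne_zero_iff.mpr ha
  have : ‖a‖ * z.im = 0 := by linarith [h2]
  rcases mul_eq_zero.mp this with h3 | h3
  · exact absurd h3 habs
  · exact h3

lemma star_z_mul_z (z : ℂ) : star z * z = (Complex.normSq z : ℂ) := by
  rw [Complex.star_def, mul_comm, Complex.mul_conj]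

/-! ### the merge move -/

lemma merge {A : Mat N} (hA : A ∈ Zset N) {r c k : Fin N}
    (hrc : r ≠ c) (hrk : r ≠ k) (hck : c ≠ k)
    (hT : (A r c * A c k * star (A r k)).re = 0) :
    ∃ A' u, JoinedIn (Zset N) A A' ∧ SuppW u ({c, k} : Finset (Fin N)) ∧
      A' = u * A * uᴴ ∧ A' r k = 0 := by
  set α : ℝ := if A c k = 0 then (A r c * star (A r k)).arg else Real.pi/2 - (A c k).arg
    with hα
  set e : ℂ := Complex.exp ((α:ℝ) * Complex.I) with he
  set B : Mat N := dphase c α * A * (dphase c α)ᴴ with hB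
  have joined1 : JoinedIn (Zset N) A B := phase_move hA c α
  have hBmem : B ∈ Zset N := joined1.target_mem
  have hBrc : B r c = A r c * star e := dpc_nk α A hrc
  have hBrk : B r k = A r k := dpc_nn α A hrc (Ne.symm hck)
  have hBck : B c k = e * A c k := dpc_kn α A (Ne.symm hck)
  have hgate : (B c k).re = 0 := by
    by_cases h0 : A c k = 0
    · rw [hBck, h0, mul_zero]
      simp
    · have heα : e = Complex.exp (((Real.pi/2 - (A c k).arg : ℝ)) * Complex.I) := by
        rw [he, hα, if_neg h0]
      have habs := abs_mul_exp_pi2_sub_arg (A c k)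
      have key : (‖(A c k)‖ : ℂ) * (B c k)
          = Complex.I * (Complex.normSq (A c k) : ℂ) := by
        rw [hBck, heα, ← star_z_mul_z (A c k)]
        calc (‖(A c k)‖ : ℂ) *
              (Complex.exp (((Real.pi/2 - (A c k).arg : ℝ)) * Complex.I) * A c k)
            = ((‖(A c k)‖ : ℂ) *
                Complex.exp (((Real.pi/2 - (A c k).arg : ℝ)) * Complex.I)) * A c k := by ring
          _ = (Complex.I * star (A c k)) * A c k := by rw [habs]
          _ = Complex.I * (star (A c k) * A c k) := by ring
      exact re_eq_zero_of_abs_mul h0 key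
  have him : (B r k * star (B r c)).im = 0 := by
    have hstar : star (B r c) = star (A r c) * e := by
      rw [hBrc, star_mul', star_star]
    by_cases h0 : A c k = 0
    · have heα : e = Complex.exp ((((A r c * star (A r k)).arg : ℝ)) * Complex.I) := by
        rw [he, hα, if_pos h0]
      have key : B r k * star (B r c)
          = star (A r c * star (A r k)) *
            Complex.exp ((((A r c * star (A r k)).arg : ℝ)) * Complex.I) := by
        rw [hBrk, hstar, heα, star_mul', star_star]
        ring
      rw [key]
      exact star_exp_mul_arg_im _
    · have heα : e = Complex.exp (((Real.pi/2 - (A c k).arg : ℝ)) * Complex.I) := by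
        rw [he, hα, if_neg h0]
      have habs := abs_mul_exp_pi2_sub_arg (A c k)
      have key : (‖(A c k)‖ : ℂ) * (B r k * star (B r c))
          = Complex.I * star (A r c * A c k * star (A r k)) := by
        rw [hBrk, hstar, heα]
        simp only [star_mul', star_star]
        linear_combination (A r k * star (A r c)) * habs
      exact im_eq_zero_of_abs_mul h0 hT key
  obtain ⟨θ, hθ⟩ := exists_angle him
  refine ⟨rot c k θ * B * (rot c k θ)ᴴ, rot c k θ * dphase c α,
    joined1.trans (rot_move hBmem hck hgate θ), ?_, ?_, ?_⟩
  · exact suppW_mul (suppW_rot c k θ)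
      (suppW_mono (by intro x hx; simp at hx; simp [hx]) (suppW_dphase c α))
  · rw [hB, conj_comp]
  · rw [rotc_out_j hck θ B hrc hrk]
    exact hθ

/-! ### the preparation move -/

lemma prep {A : Mat N} (hA : A ∈ Zset N) {r c k l : Fin N}
    (hrc : r ≠ c) (hrk : r ≠ k) (hrl : r ≠ l) (hck : c ≠ k) (hcl : c ≠ l) (hkl : k ≠ l)
    (hsign : (A r c * A c k * star (A r k)).re * (A r c * A c l * star (A r l)).re ≤ 0) :
    ∃ A' u, JoinedIn (Zset N) A A' ∧ SuppW u ({k, l} : Finset (Fin N)) ∧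
      A' = u * A * uᴴ ∧ (A' r c * A' c k * star (A' r k)).re = 0 := by
  set α : ℝ := (A k l).arg - Real.pi/2 with hα
  set e : ℂ := Complex.exp ((α:ℝ) * Complex.I) with he
  set B : Mat N := dphase l α * A * (dphase l α)ᴴ with hB
  have joined1 : JoinedIn (Zset N) A B := phase_move hA l α
  have hBmem : B ∈ Zset N := joined1.target_mem
  have hBrc : B r c = A r c := dpc_nn α A hrl hcl
  have hBck : B c k = A c k := dpc_nn α A hcl (Ne.symm (Ne.symm hkl) : k ≠ l)
  have hBrk : B r k = A r k := dpc_nn α A hrl (Ne.symm (Ne.symm hkl) : k ≠ l)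
  have hBcl : B c l = A c l * star e := dpc_nk α A hcl
  have hBrl : B r l = A r l * star e := dpc_nk α A hrl
  have hBkl : B k l = A k l * star e := dpc_nk α A (Ne.symm (Ne.symm hkl) : k ≠ l)
  have hse : star e = Complex.exp (((Real.pi/2 - (A k l).arg : ℝ)) * Complex.I) := by
    rw [he, star_phase]
    congr 1
    push_cast [hα]
    ring
  have hgate : (B k l).re = 0 := by
    by_cases h0 : A k l = 0
    · rw [hBkl, h0, zero_mul]
      simp
    · have habs := abs_mul_exp_pi2_sub_arg (A k l)
      have key : (‖(A k l)‖ : ℂ) * (B k l)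
          = Complex.I * (Complex.normSq (A k l) : ℂ) := by
        rw [hBkl, hse, ← star_z_mul_z (A k l)]
        linear_combination (A k l) * habs
      exact re_eq_zero_of_abs_mul h0 key
  have hunit : star e * e = 1 := by
    rw [he, star_phase, ← Complex.exp_add]
    simp
  set f : ℝ → ℝ := fun θ =>
    (B r c * ((Real.cos θ : ℂ) * B c k - (Real.sin θ : ℂ) * B c l) *
      star ((Real.cos θ : ℂ) * B r k - (Real.sin θ : ℂ) * B r l)).re with hf
  have hfc : Continuous f := by
    have hc1 : Continuous fun θ : ℝ => ((Real.cos θ : ℂ)) :=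
      Complex.continuous_ofReal.comp Real.continuous_cos
    have hc2 : Continuous fun θ : ℝ => ((Real.sin θ : ℂ)) :=
      Complex.continuous_ofReal.comp Real.continuous_sin
    apply Complex.continuous_re.comp
    exact ((continuous_const.mul ((hc1.mul continuous_const).sub
      (hc2.mul continuous_const))).mul
      (((hc1.mul continuous_const).sub (hc2.mul continuous_const)).star))
  have hf0 : f 0 = (A r c * A c k * star (A r k)).re := by
    rw [hf]
    simp only [Real.cos_zero, Real.sin_zero, Complex.ofReal_one, Complex.ofReal_zero,
      one_mul, zero_mul, sub_zero, hBrc, hBck, hBrk]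
  have hfpi : f (Real.pi/2) = (A r c * A c l * star (A r l)).re := by
    rw [hf]
    simp only [Real.cos_pi_div_two, Real.sin_pi_div_two, Complex.ofReal_one,
      Complex.ofReal_zero, one_mul, zero_mul, zero_sub, hBrc, hBcl, hBrl]
    congr 1
    simp only [star_neg, star_mul', star_star, mul_neg, neg_mul, neg_neg]
    calc A r c * (A c l * star e) * (star (A r l) * e)
        = (A r c * A c l * star (A r l)) * (star e * e) := by ring
      _ = A r c * A c l * star (A r l) := by rw [hunit, mul_one]
  have hs2 : f 0 * f (Real.pi/2) ≤ 0 := by rw [hf0, hfpi]; exact hsign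
  obtain ⟨θ, _, hfθ⟩ := ivt_zero hfc hs2
  refine ⟨rot k l θ * B * (rot k l θ)ᴴ, rot k l θ * dphase l α,
    joined1.trans (rot_move hBmem hkl hgate θ), ?_, ?_, ?_⟩
  · exact suppW_mul (suppW_rot k l θ)
      (suppW_mono (by intro x hx; simp at hx; simp [hx]) (suppW_dphase l α))
  · rw [hB, conj_comp]
  · rw [rotc_out_out hkl θ B hrk hrl hck hcl,
      rotc_out_i hkl θ B hck hcl, rotc_out_i hkl θ B hrk hrl]
    exact hfθ
/-! ### sum rule -/

lemma sum_rule {A : Mat N} (hA : A ∈ Zset N) {r c : Fin N} (hrc : r ≠ c)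
    {G : Finset (Fin N)} (hz : ∀ l, l ∉ G → l ≠ r → l ≠ c → A r l = 0) :
    ∑ l ∈ G, A c l * star (A r l) = 0 := by
  have huniv : ∑ l, A c l * star (A r l) = 0 := by
    have h1 : ∀ l, star (A r l) = A l r := fun l => (herm_entry hA l r).symm
    rw [Finset.sum_congr rfl (fun l _ => by rw [h1 l]), ← Matrix.mul_apply, hA.2.1,
      Matrix.one_apply_ne (Ne.symm hrc)]
  have hout : ∀ x ∈ Finset.univ, x ∉ G → A c x * star (A r x) = 0 := by
    intro x _ hx
    by_cases h1 : x = r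
    · rw [h1, hA.2.2 r, star_zero, mul_zero]
    · by_cases h2 : x = c
      · rw [h2, hA.2.2 c, zero_mul]
      · rw [hz x hx h1 h2, star_zero, mul_zero]
  rw [Finset.sum_subset (Finset.subset_univ G) hout]
  exact huniv

/-! ### the inner concentration induction -/

lemma inner (r c : Fin N) (hrc : r ≠ c) :
    ∀ (n0 : ℕ) (G : Finset (Fin N)), G.card ≤ n0 → r ∉ G → c ∉ G →
    ∀ (A : Mat N), A ∈ Zset N →
    (∀ l, l ∉ G → l ≠ r → l ≠ c → A r l = 0) →
    ∃ A' u, JoinedIn (Zset N) A A' ∧ SuppW u (insert c G) ∧ A' = u * A * uᴴ ∧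
      (∀ l, l ≠ r → l ≠ c → A' r l = 0) := by
  intro n0
  induction n0 with
  | zero =>
    intro G hcard _ _ A hA hz
    have hG : G = ∅ := Finset.card_eq_zero.mp (Nat.le_zero.mp hcard)
    refine ⟨A, 1, JoinedIn.refl hA, suppW_one _, by simp, fun l hl1 hl2 =>
      hz l (by simp [hG]) hl1 hl2⟩
  | succ n ih =>
    intro G hcard hrG hcG A hA hz
    rcases G.eq_empty_or_nonempty with hG | hG
    · refine ⟨A, 1, JoinedIn.refl hA, suppW_one _, by simp, fun l hl1 hl2 =>
        hz l (by simp [hG]) hl1 hl2⟩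
    · obtain ⟨k, hkG⟩ := hG
      have hrk : r ≠ k := fun h => hrG (h ▸ hkG)
      have hck : c ≠ k := fun h => hcG (h ▸ hkG)
      -- step 1: obtain A1 with (A1 r c * A1 c k * star (A1 r k)).re = 0
      have step1 : ∃ A1 u1, JoinedIn (Zset N) A A1 ∧ SuppW u1 (insert c G) ∧
          A1 = u1 * A * u1ᴴ ∧ (A1 r c * A1 c k * star (A1 r k)).re = 0 := by
        by_cases hTk : (A r c * A c k * star (A r k)).re = 0
        · exact ⟨A, 1, JoinedIn.refl hA, suppW_one _, by simp, hTk⟩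
        · -- find a partner l with opposite sign
          have hsum : ∑ l ∈ G, (A r c * A c l * star (A r l)).re = 0 := by
            have h1 : ∑ l ∈ G, A r c * A c l * star (A r l) = 0 := by
              rw [Finset.sum_congr rfl (fun l _ => mul_assoc (A r c) _ _),
                ← Finset.mul_sum, sum_rule hA hrc hz, mul_zero]
            calc ∑ l ∈ G, (A r c * A c l * star (A r l)).re
                = (∑ l ∈ G, A r c * A c l * star (A r l)).re := (Complex.re_sum G _).symm
              _ = 0 := by rw [h1]; simp
          have hsum' : ∑ l ∈ G.erase k, (A r c * A c l * star (A r l)).re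
              = -(A r c * A c k * star (A r k)).re := by
            have := Finset.add_sum_erase G (fun l => (A r c * A c l * star (A r l)).re) hkG
            linarith [this, hsum]
          have hpartner : ∃ l ∈ G.erase k,
              (A r c * A c k * star (A r k)).re * (A r c * A c l * star (A r l)).re ≤ 0 := by
            rcases lt_or_gt_of_ne hTk with hneg | hpos
            · -- sum over erase is -Tk > 0, so some term > 0
              by_contra hcon
              push_neg at hcon
              have hall : ∀ l ∈ G.erase k, (A r c * A c l * star (A r l)).re ≤ 0 := by
                intro l hl
                by_contra hcon2
                push_neg at hcon2
                have := hcon l hl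
                nlinarith
              have := Finset.sum_nonpos hall
              rw [hsum'] at this
              linarith
            · by_contra hcon
              push_neg at hcon
              have hall : ∀ l ∈ G.erase k, 0 ≤ (A r c * A c l * star (A r l)).re := by
                intro l hl
                by_contra hcon2
                push_neg at hcon2
                have := hcon l hl
                nlinarith
              have := Finset.sum_nonneg hall
              rw [hsum'] at this
              linarith
          obtain ⟨l, hlmem, hsign⟩ := hpartner
          have hlG : l ∈ G := Finset.mem_of_mem_erase hlmem
          have hkl : k ≠ l := fun h => (Finset.ne_of_mem_erase hlmem) h.symm
          have hrl : r ≠ l := fun h => hrG (h ▸ hlG)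
          have hcl : c ≠ l := fun h => hcG (h ▸ hlG)
          obtain ⟨A1, u1, hj1, hs1, he1, hz1⟩ := prep hA hrc hrk hrl hck hcl hkl hsign
          refine ⟨A1, u1, hj1, suppW_mono ?_ hs1, he1, hz1⟩
          intro x hx
          simp only [Finset.mem_insert] at hx ⊢
          rcases hx with h | h
          · right; rw [h]; exact hkG
          · right; rw [Finset.mem_singleton.mp h]; exact hlG
      obtain ⟨A1, u1, hj1, hs1, he1, hTk1⟩ := step1
      have hA1 : A1 ∈ Zset N := hj1.target_mem
      obtain ⟨A2, u2, hj2, hs2, he2, hz2⟩ := merge hA1 hrc hrk hck hTk1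
      have hA2 : A2 ∈ Zset N := hj2.target_mem
      -- recurse on G.erase k
      have hcard' : (G.erase k).card ≤ n := by
        have := Finset.card_erase_of_mem hkG
        have h2 := Finset.card_pos.mpr ⟨k, hkG⟩
        omega
      have hzrec : ∀ l, l ∉ G.erase k → l ≠ r → l ≠ c → A2 r l = 0 := by
        intro l hl hlr hlc
        by_cases hlk : l = k
        · rw [hlk]; exact hz2
        · have hlG : l ∉ G := by
            intro hcon
            exact hl (Finset.mem_erase.mpr ⟨hlk, hcon⟩)
          have h0 : A r l = 0 := hz l hlG hlr hlc
          have h1 : A1 r l = A r l := by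
            rw [he1]
            exact suppW_conj_out hs1 A
              (by simp [hrc, hrG, Finset.mem_insert])
              (by simp [hlc, hlG, Finset.mem_insert])
          have h2 : A2 r l = A1 r l := by
            rw [he2]
            exact suppW_conj_out hs2 A1
              (by simp [hrc, hrk])
              (by simp [hlc, hlk])
          rw [h2, h1, h0]
      obtain ⟨A3, u3, hj3, hs3, he3, hz3⟩ := ih (G.erase k) hcard'
        (fun h => hrG (Finset.mem_of_mem_erase h))
        (fun h => hcG (Finset.mem_of_mem_erase h)) A2 hA2 hzrec
      refine ⟨A3, u3 * (u2 * u1), hj1.trans (hj2.trans hj3), ?_, ?_, hz3⟩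
      · apply suppW_mul
        · apply suppW_mono _ hs3
          intro x hx
          rcases Finset.mem_insert.mp hx with h | h
          · simp [h]
          · exact Finset.mem_insert.mpr (Or.inr (Finset.mem_of_mem_erase h))
        · apply suppW_mul
          · apply suppW_mono _ hs2
            intro x hx
            simp only [Finset.mem_insert, Finset.mem_singleton] at hx
            rcases hx with h | h
            · simp [h]
            · exact Finset.mem_insert.mpr (Or.inr (h ▸ hkG))
          · exact hs1
      · rw [he3, he2, he1, conj_comp, conj_comp, Matrix.mul_assoc u3 u2 u1]
/-! ### the standard matrix and pairing -/

def pairSwap (n : ℕ) (p : Fin (2*n)) : Fin (2*n) :=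
  ⟨if p.val % 2 = 0 then p.val + 1 else p.val - 1, by
    have := p.isLt
    split_ifs with h <;> omega⟩

lemma pairSwap_val (n : ℕ) (p : Fin (2*n)) :
    (pairSwap n p).val = if p.val % 2 = 0 then p.val + 1 else p.val - 1 := rfl

lemma pairSwap_ne (n : ℕ) (p : Fin (2*n)) : pairSwap n p ≠ p := by
  intro h
  have := congrArg Fin.val h
  rw [pairSwap_val] at this
  split_ifs at this <;> omega

lemma pairSwap_invol (n : ℕ) (p : Fin (2*n)) : pairSwap n (pairSwap n p) = p := by
  apply Fin.ext
  rw [pairSwap_val, pairSwap_val]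
  have := p.isLt
  have h2 := Nat.mod_two_eq_zero_or_one p.val
  split_ifs with h1 h2' h3 <;> omega

lemma pairSwap_val_lt (n m : ℕ) (p : Fin (2*n)) (h : p.val < 2*m) :
    (pairSwap n p).val < 2*m := by
  rw [pairSwap_val]
  split_ifs with h1 <;> omega

noncomputable def A0 (n : ℕ) : Mat (2*n) := fun p q => if q = pairSwap n p then 1 else 0

lemma A0_symm_cond (n : ℕ) (p q : Fin (2*n)) : q = pairSwap n p ↔ p = pairSwap n q := by
  constructor
  · intro h; rw [h, pairSwap_invol]
  · intro h; rw [h, pairSwap_invol]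

lemma A0_mem (n : ℕ) : A0 n ∈ Zset (2*n) := by
  refine ⟨?_, ?_, ?_⟩
  · ext p q
    rw [Matrix.conjTranspose_apply, A0, A0]
    by_cases h : p = pairSwap n q
    · rw [if_pos h, if_pos ((A0_symm_cond n p q).mpr h), star_one]
    · rw [if_neg h, if_neg (fun hc => h ((A0_symm_cond n p q).mp hc)), star_zero]
  · ext p q
    rw [Matrix.mul_apply]
    have key : ∀ l, A0 n p l * A0 n l q
        = (if pairSwap n p = l then A0 n l q else 0) := by
      intro l
      rw [A0]
      by_cases h : l = pairSwap n p
      · rw [if_pos h, if_pos h.symm, one_mul]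
      · rw [if_neg h, if_neg (fun hc => h hc.symm), zero_mul]
    rw [Finset.sum_congr rfl (fun l _ => key l), Finset.sum_ite_eq]
    simp only [Finset.mem_univ, if_true]
    rw [A0, pairSwap_invol, Matrix.one_apply]
    by_cases h : q = p
    · rw [if_pos h, if_pos h.symm]
    · rw [if_neg h, if_neg (fun hc => h hc.symm)]
  · intro i
    rw [A0, if_neg (fun hc => pairSwap_ne n i hc.symm)]

/-! ### outer induction -/

lemma outer (n : ℕ) : ∀ (d m : ℕ), m + d = n → ∀ A ∈ Zset (2*n),
    (∀ p : Fin (2*n), p.val < 2*m → ∀ q, A p q = A0 n p q) →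
    JoinedIn (Zset (2*n)) A (A0 n) := by
  intro d
  induction d with
  | zero =>
    intro m hm A hA hres
    have hAeq : A = A0 n := by
      ext p q
      exact hres p (by have := p.isLt; omega) q
    rw [hAeq]
    exact JoinedIn.refl (A0_mem n)
  | succ d ihd =>
    intro m hm A hA hres
    have hmn : m < n := by omega
    set r : Fin (2*n) := ⟨2*m, by omega⟩ with hr
    set c : Fin (2*n) := ⟨2*m+1, by omega⟩ with hc
    have hrc : r ≠ c := by
      intro h
      have := congrArg Fin.val h
      simp [hr, hc] at this
    have hsw : pairSwap n r = c := by
      apply Fin.ext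
      rw [pairSwap_val]
      simp [hr, hc]
    have hswc : pairSwap n c = r := by
      rw [← hsw, pairSwap_invol]
    set G : Finset (Fin (2*n)) := Finset.univ.filter (fun l => 2*m+2 ≤ l.val) with hG
    have hrG : r ∉ G := by simp [hG, hr]
    have hcG : c ∉ G := by simp [hG, hc]
    have hresz : ∀ p : Fin (2*n), p.val < 2*m → ∀ s, s.val ≥ 2*m → A p s = 0 := by
      intro p hp s hs
      rw [hres p hp s, A0, if_neg]
      intro hcon
      have := pairSwap_val_lt n m p hp
      rw [← hcon] at this
      omega
    have hz : ∀ l, l ∉ G → l ≠ r → l ≠ c → A r l = 0 := by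
      intro l hlG hlr hlc
      have hlv : l.val < 2*m := by
        simp only [hG, Finset.mem_filter, Finset.mem_univ, true_and, not_le] at hlG
        have h1 : l.val ≠ 2*m := fun h => hlr (Fin.ext h)
        have h2 : l.val ≠ 2*m+1 := fun h => hlc (Fin.ext h)
        omega
      rw [herm_entry hA r l, hresz l hlv r (by simp [hr])]
      simp
    obtain ⟨A1, u1, hj1, hs1, he1, hz1⟩ :=
      inner r c hrc G.card G (le_refl _) hrG hcG A hA hz
    have hA1 : A1 ∈ Zset (2*n) := hj1.target_mem
    -- row norm : A1 r c has modulus one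
    have hrownorm : A1 r c * star (A1 r c) = 1 := by
      have h1 : (A1 * A1) r r = 1 := by rw [hA1.2.1, Matrix.one_apply_eq]
      rw [Matrix.mul_apply] at h1
      have h2 : ∀ l, A1 r l * A1 l r = A1 r l * star (A1 r l) := by
        intro l
        rw [herm_entry hA1 l r]
      rw [Finset.sum_congr rfl (fun l _ => h2 l)] at h1
      rw [← h1, Finset.sum_eq_single c]
      · intro b _ hb
        by_cases hbr : b = r
        · rw [hbr, hA1.2.2 r, zero_mul]
        · rw [hz1 b hbr hb, zero_mul]
      · intro h
        exact absurd (Finset.mem_univ c) h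
    have hnormSq : Complex.normSq (A1 r c) = 1 := by
      have := hrownorm
      rw [Complex.star_def, Complex.mul_conj] at this
      exact_mod_cast this
    have habs1 : ‖(A1 r c)‖ = 1 := by
      have h1 := Complex.sq_norm (A1 r c)
      nlinarith [norm_nonneg (A1 r c), h1, hnormSq]
    -- phase to make the entry exactly 1
    set α : ℝ := (A1 r c).arg with hα
    set A2 : Mat (2*n) := dphase c α * A1 * (dphase c α)ᴴ with hA2eq
    have hj2 : JoinedIn (Zset (2*n)) A1 A2 := phase_move hA1 c α
    have hA2 : A2 ∈ Zset (2*n) := hj2.target_mem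
    have hA2rc : A2 r c = 1 := by
      rw [hA2eq, dpc_nk α A1 hrc, star_phase, ← Complex.norm_mul_exp_arg_mul_I (A1 r c),
        habs1, ← hα]
      rw [Complex.ofReal_one, one_mul, ← Complex.exp_add]
      simp
    have hz2 : ∀ l, l ≠ c → A2 r l = A1 r l := by
      intro l hlc
      rw [hA2eq, dpc_nn α A1 hrc hlc]
    -- column c of A2 vanishes off r
    have hcol : ∀ p, p ≠ r → A2 p c = 0 := by
      intro p hpr
      have h1 : (A2 * A2) c c = 1 := by rw [hA2.2.1, Matrix.one_apply_eq]
      rw [Matrix.mul_apply] at h1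
      have h2 : ∀ l, A2 c l * A2 l c = (Complex.normSq (A2 l c) : ℂ) := by
        intro l
        rw [herm_entry hA2 c l, star_z_mul_z]
      rw [Finset.sum_congr rfl (fun l _ => h2 l)] at h1
      have h3 : ∑ l, Complex.normSq (A2 l c) = 1 := by
        have := h1
        push_cast at this ⊢
        exact_mod_cast this
      have h4 : Complex.normSq (A2 r c) = 1 := by rw [hA2rc]; simp
      have h5 : ∑ l ∈ Finset.univ.erase r, Complex.normSq (A2 l c) = 0 := by
        have hsplit : Complex.normSq (A2 r c) +
            ∑ l ∈ Finset.univ.erase r, Complex.normSq (A2 l c)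
            = ∑ l, Complex.normSq (A2 l c) :=
          Finset.add_sum_erase Finset.univ (fun l => Complex.normSq (A2 l c))
            (Finset.mem_univ r)
        linarith [hsplit, h3, h4]
      have h6 : ∀ l ∈ Finset.univ.erase r, Complex.normSq (A2 l c) = 0 := by
        intro l hl
        have := (Finset.sum_eq_zero_iff_of_nonneg
          (fun l _ => Complex.normSq_nonneg (A2 l c))).mp h5
        exact this l hl
      have := h6 p (Finset.mem_erase.mpr ⟨hpr, Finset.mem_univ p⟩)
      exact Complex.normSq_eq_zero.mp this
    -- establish resolvedness up to m+1
    have hres2 : ∀ p : Fin (2*n), p.val < 2*(m+1) → ∀ q, A2 p q = A0 n p q := by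
      intro p hp q
      by_cases hpm : p.val < 2*m
      · -- old resolved rows are untouched
        have hprow : ∀ s, s ∈ insert c G → A p s = 0 := by
          intro s hs
          apply hresz p hpm s
          rcases Finset.mem_insert.mp hs with h | h
          · rw [h, hc]
            exact Nat.le_succ (2*m)
          · simp only [hG, Finset.mem_filter] at h
            omega
        have hpc : p ≠ c := by
          intro h
          rw [h] at hpm
          have h2 : (2*m+1 : ℕ) < 2*m := hpm
          omega
        have hpr : p ≠ r := by
          intro h
          rw [h] at hpm
          have h2 : (2*m : ℕ) < 2*m := hpm
          omega
        have hpW : p ∉ insert c G := by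
          simp only [Finset.mem_insert]
          push_neg
          refine ⟨hpc, ?_⟩
          simp only [hG, Finset.mem_filter, Finset.mem_univ, true_and, not_le]
          omega
        have h1 : ∀ s, A1 p s = A p s := by
          intro s
          rw [he1]
          exact suppW_conj_rowzero hs1 hpW hprow s
        by_cases hqc : q = c
        · have hA0pc : A0 n p c = 0 := by
            rw [A0, if_neg]
            intro hcon
            have hlt := pairSwap_val_lt n m p hpm
            rw [← hcon] at hlt
            have h2 : (2*m+1 : ℕ) < 2*m := hlt
            omega
          rw [hqc, hA2eq, dpc_nk α A1 hpc, h1 c,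
            hprow c (Finset.mem_insert_self c G), zero_mul, hA0pc]
        · rw [hA2eq, dpc_nn α A1 hpc hqc, h1 q, hres p hpm q]
      · have hpval : p.val = 2*m ∨ p.val = 2*m+1 := by omega
        rcases hpval with hpv | hpv
        · have hpr : p = r := Fin.ext hpv
          rw [hpr]
          by_cases hqc : q = c
          · rw [hqc, hA2rc, A0, if_pos hsw.symm]
          · rw [A0, if_neg (fun hcon : q = pairSwap n r => hqc (hcon.trans hsw))]
            by_cases hqr : q = r
            · rw [hqr, hA2.2.2 r]
            · rw [hz2 q hqc, hz1 q hqr hqc]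
        · have hpc : p = c := Fin.ext hpv
          rw [hpc]
          by_cases hqr : q = r
          · rw [hqr, herm_entry hA2 c r, hA2rc, A0, if_pos hswc.symm, star_one]
          · rw [herm_entry hA2 c q, hcol q hqr, star_zero, A0,
              if_neg (fun hcon : q = pairSwap n c => hqr (hcon.trans hswc))]
    have := ihd (m+1) (by omega) A2 hA2 hres2
    exact hj1.trans (hj2.trans this)
/-! ### path connectedness of Zset -/

lemma zpc (n : ℕ) : IsPathConnected (Zset (2*n)) := by
  refine ⟨A0 n, A0_mem n, fun {A} hA => ?_⟩
  exact (outer n n 0 (by omega) A hA (fun p hp q => absurd hp (by omega))).symm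

end ProjHalf

/-- The set of orthogonal projections in `M_{2n}(ℂ)` with all diagonal entries
equal to `1/2` is path-connected. -/
theorem projections_half_diagonal_pathConnected (n : ℕ) (hn : 1 ≤ n) :
    IsPathConnected {p : Matrix (Fin (2 * n)) (Fin (2 * n)) ℂ |
      p * p = p ∧ p.conjTranspose = p ∧ ∀ i, p i i = 1 / 2} := by
  have hZ := ProjHalf.zpc n
  have himg : {p : Matrix (Fin (2 * n)) (Fin (2 * n)) ℂ |
      p * p = p ∧ p.conjTranspose = p ∧ ∀ i, p i i = 1 / 2}
      = (fun X : ProjHalf.Mat (2*n) => ((1:ℂ)/2) • (1 + X)) '' (ProjHalf.Zset (2*n)) := by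
    ext P
    constructor
    · intro hP
      refine ⟨P + P - 1, ⟨?_, ?_, ?_⟩, ?_⟩
      · rw [Matrix.conjTranspose_sub, Matrix.conjTranspose_add, hP.2.1,
          Matrix.conjTranspose_one]
      · have h1 : (P + P - 1) * (P + P - 1)
            = (P*P) + (P*P) + ((P*P) + (P*P)) - (P + P + (P + P)) + 1 := by noncomm_ring
        rw [h1, hP.1]
        noncomm_ring
      · intro i
        simp only [Matrix.sub_apply, Matrix.add_apply, Matrix.one_apply_eq, hP.2.2 i]
        norm_num
      · ext i j
        simp only [Matrix.smul_apply, Matrix.add_apply, Matrix.sub_apply,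
          Matrix.one_apply, smul_eq_mul]
        by_cases h : i = j
        · rw [if_pos h]
          ring
        · rw [if_neg h]
          ring
    · rintro ⟨X, hX, rfl⟩
      refine ⟨?_, ?_, ?_⟩
      · have h1 : (1 + X) * (1 + X) = (1 + X) + (1 + X) := by
          have h2 : (1 + X) * (1 + X) = 1 + X + X + X * X := by noncomm_ring
          rw [h2, hX.2.1]
          abel
        rw [Matrix.smul_mul, Matrix.mul_smul, h1, smul_smul]
        match_scalars <;> norm_num
      · rw [Matrix.conjTranspose_smul, Matrix.conjTranspose_add, Matrix.conjTranspose_one,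
          hX.1]
        congr 1
        simp
      · intro i
        simp only [Matrix.smul_apply, Matrix.add_apply, Matrix.one_apply_eq, hX.2.2 i,
          smul_eq_mul]
        norm_num
  rw [himg]
  exact hZ.image (by fun_prop)
end

section
/- If p is an orthogonal projection on a Hilbert space H = K ⊕ L written as a 2×2 block matrix [[a, b],[b*, d]], then 0 ≤ a ≤ 1, 0 ≤ d ≤ 1, |b*| = √(a(1−a)), |b| = √(d(1−d)), and ab = b(1−d). -/
set_option synthInstance.maxHeartbeats 1000000
set_option maxHeartbeats 1000000

open ContinuousLinearMap in
/-- Auxiliary: if `a` is self-adjoint and `a∘a + c†∘c = a`, then `0 ≤ a ≤ 1`. -/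
lemma aux_pos {E F : Type*} [NormedAddCommGroup E] [InnerProductSpace ℂ E] [CompleteSpace E]
    [NormedAddCommGroup F] [InnerProductSpace ℂ F] [CompleteSpace F]
    (a : E →L[ℂ] E) (c : E →L[ℂ] F) (ha : IsSelfAdjoint a)
    (h : ∀ k, a (a k) + (adjoint c) (c k) = a k) :
    a.IsPositive ∧ (1 - a).IsPositive := by
  have key : ∀ x : E, RCLike.re (inner ℂ (a x) x) = ‖a x‖ ^ 2 + ‖c x‖ ^ 2 := by
    intro x
    have h1 : (inner ℂ (a x) x) = inner ℂ (a (a x) + (adjoint c) (c x)) x := by rw [h]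
    rw [inner_add_left, adjoint_inner_left] at h1
    have h2 := adjoint_inner_left a x (a x)
    rw [ha.adjoint_eq] at h2
    rw [h2] at h1
    rw [h1, inner_self_eq_norm_sq_to_K, inner_self_eq_norm_sq_to_K]
    simp [← Complex.ofReal_pow]
  constructor
  · refine ⟨ha.isSymmetric, fun x => ?_⟩
    rw [reApplyInnerSelf, key x]
    positivity
  · refine ⟨((IsSelfAdjoint.one _).sub ha).isSymmetric, fun x => ?_⟩
    rw [reApplyInnerSelf]
    have : ((1 - a : E →L[ℂ] E) x) = x - a x := by simp
    rw [this, inner_sub_left, map_sub]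
    have hre : RCLike.re (inner ℂ x x) = ‖x‖ ^ 2 := by
      simp [inner_self_eq_norm_sq, sq]
    rw [hre, key x]
    have hcs : RCLike.re (inner ℂ (a x) x) ≤ ‖a x‖ * ‖x‖ := re_inner_le_norm _ _
    rw [key x] at hcs
    nlinarith [sq_nonneg (‖x‖ - ‖a x‖), sq_nonneg (‖c x‖), norm_nonneg (a x), norm_nonneg x]

set_option synthInstance.maxHeartbeats 1000000
open ContinuousLinearMap in
/-- If `p` is an orthogonal projection on a Hilbert space `H = K ⊕ L` (the ℓ²-sum),
written in block form `[[a, b], [b*, d]]`, then `0 ≤ a ≤ 1`, `0 ≤ d ≤ 1`,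
`|b*| = √(a(1-a))`, `|b| = √(d(1-d))`, and `ab = b(1-d)`. -/
theorem projection_block_structure
    {K L : Type*} [NormedAddCommGroup K] [InnerProductSpace ℂ K] [CompleteSpace K]
    [NormedAddCommGroup L] [InnerProductSpace ℂ L] [CompleteSpace L]
    (p : WithLp 2 (K × L) →L[ℂ] WithLp 2 (K × L))
    (a : K →L[ℂ] K) (b : L →L[ℂ] K) (d : L →L[ℂ] L)
    (hp2 : p ∘L p = p) (hps : adjoint p = p)
    (hblock : ∀ (k : K) (l : L),
      p ((WithLp.equiv 2 (K × L)).symm (k, l)) =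
        (WithLp.equiv 2 (K × L)).symm (a k + b l, adjoint b k + d l)) :
    a.IsPositive ∧ (1 - a).IsPositive ∧ d.IsPositive ∧ (1 - d).IsPositive ∧
    CFC.sqrt (b ∘L adjoint b) = CFC.sqrt (a ∘L (1 - a)) ∧
    CFC.sqrt (adjoint b ∘L b) = CFC.sqrt (d ∘L (1 - d)) ∧
    a ∘L b = b ∘L (1 - d) := by
  -- block equations from p² = p
  have key : ∀ (k : K) (l : L),
      a (a k + b l) + b (adjoint b k + d l) = a k + b l ∧
      adjoint b (a k + b l) + d (adjoint b k + d l) = adjoint b k + d l := by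
    intro k l
    have h : p (p ((WithLp.equiv 2 (K × L)).symm (k, l))) =
        p ((WithLp.equiv 2 (K × L)).symm (k, l)) := by
      conv_lhs => rw [← ContinuousLinearMap.comp_apply, hp2]
    rw [hblock k l, hblock (a k + b l) (adjoint b k + d l)] at h
    have h' := (WithLp.equiv 2 (K × L)).symm.injective h
    exact ⟨congrArg Prod.fst h', congrArg Prod.snd h'⟩
  have h1 : ∀ k : K, a (a k) + b (adjoint b k) = a k := by
    intro k
    have := (key k 0).1
    simpa using this
  have h2 : ∀ l : L, a (b l) + b (d l) = b l := by
    intro l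
    have := (key 0 l).1
    simpa using this
  have h4 : ∀ l : L, adjoint b (b l) + d (d l) = d l := by
    intro l
    have := (key 0 l).2
    simpa using this
  -- self-adjointness of p as a bilinear statement
  have hpsa : ∀ x y : WithLp 2 (K × L), (inner ℂ (p x) y) = inner ℂ x (p y) := by
    intro x y
    conv_lhs => rw [← hps]
    rw [ContinuousLinearMap.adjoint_inner_left]
  have ha : IsSelfAdjoint a := by
    rw [ContinuousLinearMap.isSelfAdjoint_iff']
    symm
    rw [ContinuousLinearMap.eq_adjoint_iff]
    intro k k'
    have := hpsa ((WithLp.equiv 2 (K × L)).symm (k, 0)) ((WithLp.equiv 2 (K × L)).symm (k', 0))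
    rw [hblock k 0, hblock k' 0] at this
    simpa [WithLp.prod_inner_apply] using this
  have hd : IsSelfAdjoint d := by
    rw [ContinuousLinearMap.isSelfAdjoint_iff']
    symm
    rw [ContinuousLinearMap.eq_adjoint_iff]
    intro l l'
    have := hpsa ((WithLp.equiv 2 (K × L)).symm (0, l)) ((WithLp.equiv 2 (K × L)).symm (0, l'))
    rw [hblock 0 l, hblock 0 l'] at this
    simpa [WithLp.prod_inner_apply] using this
  have h1' : ∀ k : K, a (a k) + adjoint (adjoint b) (adjoint b k) = a k := by
    intro k; simpa [ContinuousLinearMap.adjoint_adjoint] using h1 k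
  have h4' : ∀ l : L, d (d l) + adjoint b (b l) = d l := by
    intro l; rw [add_comm]; exact h4 l
  obtain ⟨hapos, hanpos⟩ := aux_pos a (adjoint b) ha h1'
  obtain ⟨hdpos, hdnpos⟩ := aux_pos d b hd h4'
  refine ⟨hapos, hanpos, hdpos, hdnpos, ?_, ?_, ?_⟩
  · congr 1
    ext k
    have := h1 k
    simp only [ContinuousLinearMap.comp_apply, ContinuousLinearMap.sub_apply,
      ContinuousLinearMap.one_apply, map_sub]
    linear_combination (norm := module) this
  · congr 1
    ext l
    have := h4 l
    simp only [ContinuousLinearMap.comp_apply, ContinuousLinearMap.sub_apply,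
      ContinuousLinearMap.one_apply, map_sub]
    linear_combination (norm := module) this
  · ext l
    have := h2 l
    simp only [ContinuousLinearMap.comp_apply, ContinuousLinearMap.sub_apply,
      ContinuousLinearMap.one_apply, map_sub]
    linear_combination (norm := module) this
end

section
/- A diagonal matrix d ∈ M_n is the diagonal of an idempotent matrix if and only if d = 0, d = id, or the trace of d is an integer in {1, …, n−1}. -/
open Finset

private lemma sum_fin_eq (m : ℕ) (g : Fin m → ℂ) (f : ℕ → ℂ) (h : ∀ t : Fin m, g t = f t.val) :
    ∑ t, g t = ∑ t ∈ range m, f t := by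
  rw [← Fin.sum_univ_eq_sum_range]
  exact Finset.sum_congr rfl fun t _ => h t

private lemma exists_idem_diag (n k : ℕ) (hk1 : 1 ≤ k) (hkn : k < n) (d : Fin n → ℂ)
    (hsum : ∑ i, d i = (k : ℂ)) :
    ∃ q : Matrix (Fin n) (Fin n) ℂ, q * q = q ∧ ∀ i, q i i = d i := by
  set dn : ℕ → ℂ := fun m => if h : m < n then d ⟨m, h⟩ else 0 with hdn
  set S : ℂ := ∑ j ∈ Ico (k + 1) n, dn j with hS
  set A : Matrix (Fin n) (Fin k) ℂ :=
    Matrix.of fun i t => if (i : ℕ) < k then (if (i : ℕ) = (t : ℕ) then 1 else 0) else -1 with hA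
  set B : Matrix (Fin k) (Fin n) ℂ :=
    Matrix.of fun t j =>
      if (j : ℕ) < k then (if (t : ℕ) = (j : ℕ) then 1 else 0) + (dn t - 1)
      else if (j : ℕ) = k then (dn t - 1) + (if (t : ℕ) = 0 then S else 0)
      else if (t : ℕ) = 0 then -(dn j) else 0 with hB
  -- total sum in terms of dn
  have hdnd : ∀ i : Fin n, dn i.val = d i := by
    intro i
    simp [hdn, i.isLt]
  have hsum' : ∑ j ∈ range n, dn j = (k : ℂ) := by
    rw [← sum_fin_eq n d dn fun t => (hdnd t).symm]
    exact hsum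
  have hsplit : ∑ j ∈ range k, dn j + (dn k + S) = (k : ℂ) := by
    rw [hS, ← Finset.sum_eq_sum_Ico_succ_bot hkn dn, Finset.sum_range_add_sum_Ico dn hkn.le]
    exact hsum'
  have hBA : B * A = 1 := by
    ext t u
    rw [Matrix.mul_apply]
    have : ∑ j : Fin n, B t j * A j u =
        ∑ j ∈ range n, ((if j < k then (if (t : ℕ) = j then 1 else 0) + (dn t - 1)
            else if j = k then (dn t - 1) + (if (t : ℕ) = 0 then S else 0)
            else if (t : ℕ) = 0 then -(dn j) else 0)
          * (if j < k then (if j = (u : ℕ) then 1 else 0) else -1)) := by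
      apply sum_fin_eq
      intro j
      rfl
    rw [this, ← Finset.sum_range_add_sum_Ico _ hkn.le,
      Finset.sum_eq_sum_Ico_succ_bot hkn]
    have h1 : ∑ j ∈ range k, ((if j < k then (if (t : ℕ) = j then 1 else 0) + (dn t - 1)
            else if j = k then (dn t - 1) + (if (t : ℕ) = 0 then S else 0)
            else if (t : ℕ) = 0 then -(dn j) else 0)
          * (if j < k then (if j = (u : ℕ) then 1 else 0) else -1)) =
        (if (t : ℕ) = (u : ℕ) then 1 else 0) + (dn t - 1) := by
      rw [Finset.sum_eq_single_of_mem (u : ℕ) (Finset.mem_range.mpr u.isLt)]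
      · simp [u.isLt]
      · intro b hb hbu
        simp [Finset.mem_range.mp hb, hbu]
    have h2 : ∑ j ∈ Ico (k + 1) n, ((if j < k then (if (t : ℕ) = j then 1 else 0) + (dn t - 1)
            else if j = k then (dn t - 1) + (if (t : ℕ) = 0 then S else 0)
            else if (t : ℕ) = 0 then -(dn j) else 0)
          * (if j < k then (if j = (u : ℕ) then 1 else 0) else -1)) =
        if (t : ℕ) = 0 then S else 0 := by
      rcases eq_or_ne (t : ℕ) 0 with ht | ht
      · rw [if_pos ht, hS]
        apply Finset.sum_congr rfl
        intro j hj
        obtain ⟨hj1, hj2⟩ := Finset.mem_Ico.mp hj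
        have hjk : ¬ j < k := by omega
        have hjk2 : j ≠ k := by omega
        rw [if_neg hjk, if_neg hjk, if_neg hjk2, if_pos ht]
        ring
      · rw [if_neg ht]
        apply Finset.sum_eq_zero
        intro j hj
        obtain ⟨hj1, hj2⟩ := Finset.mem_Ico.mp hj
        have hjk : ¬ j < k := by omega
        have hjk2 : j ≠ k := by omega
        rw [if_neg hjk, if_neg hjk, if_neg hjk2, if_neg ht]
        ring
    rw [h1, h2]
    have hkk : ¬ k < k := lt_irrefl k
    rw [if_neg hkk, if_neg hkk, if_pos rfl]
    have : (1 : Matrix (Fin k) (Fin k) ℂ) t u = if (t : ℕ) = (u : ℕ) then 1 else 0 := by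
      by_cases h : t = u
      · rw [h, Matrix.one_apply_eq, if_pos rfl]
      · rw [Matrix.one_apply_ne h, if_neg (fun hc => h (Fin.ext hc))]
    rw [this]
    rcases eq_or_ne (t : ℕ) 0 with ht | ht <;> simp [ht] <;> ring
  refine ⟨A * B, ?_, ?_⟩
  · rw [Matrix.mul_assoc, ← Matrix.mul_assoc B, hBA, Matrix.one_mul]
  · intro i
    rw [Matrix.mul_apply]
    rcases lt_trichotomy (i : ℕ) k with hi | hi | hi
    · have hconv : ∑ t : Fin k, A i t * B t i =
          ∑ t ∈ range k, ((if (i : ℕ) < k then (if (i : ℕ) = t then 1 else 0) else -1)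
            * ((if t = (i : ℕ) then 1 else 0) + (dn t - 1))) := by
        apply sum_fin_eq
        intro t
        simp [hA, hB, hi]
      rw [hconv, Finset.sum_eq_single_of_mem (i : ℕ) (Finset.mem_range.mpr hi)]
      · rw [← hdnd i]
        simp [hi]
      · intro b hb hbi
        simp [hi, Ne.symm hbi]
    · have hconv : ∑ t : Fin k, A i t * B t i =
          ∑ t ∈ range k, ((-1) * ((dn t - 1) + (if t = 0 then S else 0))) := by
        apply sum_fin_eq
        intro t
        have h1 : ¬ (i : ℕ) < k := by omega
        simp only [hA, hB, Matrix.of_apply, if_neg h1, if_pos hi]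
      rw [hconv]
      have e3 : ∑ t ∈ range k, ((if t = 0 then S else 0) : ℂ) = S := by
        rw [Finset.sum_ite_eq' (range k) 0 fun _ => S, if_pos (Finset.mem_range.mpr hk1)]
      have e4 : ∑ t ∈ range k, ((dn t - 1) + if t = 0 then S else 0) =
          (∑ t ∈ range k, dn t) - k + S := by
        rw [Finset.sum_add_distrib, Finset.sum_sub_distrib, Finset.sum_const, e3]
        simp
      calc ∑ t ∈ range k, (-1 : ℂ) * ((dn t - 1) + if t = 0 then S else 0)
          = ∑ t ∈ range k, -((dn t - 1) + if t = 0 then S else 0) :=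
            Finset.sum_congr rfl fun t _ => by ring
        _ = -∑ t ∈ range k, ((dn t - 1) + if t = 0 then S else 0) := by
            rw [Finset.sum_neg_distrib]
        _ = -((∑ t ∈ range k, dn t) - k + S) := by rw [e4]
        _ = d i := by
            rw [← hdnd i, hi]
            linear_combination -hsplit
    · have hconv : ∑ t : Fin k, A i t * B t i =
          ∑ t ∈ range k, ((-1) * (if t = 0 then -(dn (i : ℕ)) else 0)) := by
        apply sum_fin_eq
        intro t
        have h1 : ¬ (i : ℕ) < k := by omega
        have h2 : (i : ℕ) ≠ k := by omega
        simp only [hA, hB, Matrix.of_apply, if_neg h1, if_neg h2]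
      rw [hconv]
      calc ∑ t ∈ range k, (-1 : ℂ) * (if t = 0 then -(dn (i : ℕ)) else 0)
          = ∑ t ∈ range k, (if t = 0 then dn (i : ℕ) else 0) :=
            Finset.sum_congr rfl fun t _ => by split <;> ring
        _ = dn (i : ℕ) := by
            rw [Finset.sum_ite_eq' (range k) 0 fun _ => dn (i : ℕ),
              if_pos (Finset.mem_range.mpr hk1)]
        _ = d i := hdnd i


/-- Forward direction core: an idempotent complex matrix is 0, 1, or has natural trace in 1..n-1. -/
theorem idem_trace (n : ℕ) (q : Matrix (Fin n) (Fin n) ℂ) (h : q * q = q) :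
    q = 0 ∨ q = 1 ∨ ∃ k : ℕ, 1 ≤ k ∧ k ≤ n - 1 ∧ Matrix.trace q = k := by
  set f := Matrix.toLin' q with hf
  have hff : f ∘ₗ f = f := by rw [hf, ← Matrix.toLin'_mul, h]
  obtain ⟨p, hp⟩ := (LinearMap.isProj_iff_isIdempotentElem f).mpr hff
  have htr : Matrix.trace q = (Module.finrank ℂ p : ℂ) := by
    have := LinearMap.IsProj.trace hp
    rwa [LinearMap.trace_eq_matrix_trace ℂ (Pi.basisFun ℂ (Fin n)),
      LinearMap.toMatrix_eq_toMatrix', hf, LinearMap.toMatrix'_toLin'] at this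
  have hle : Module.finrank ℂ p ≤ n := by
    simpa using Submodule.finrank_le p
  set k := Module.finrank ℂ p with hk
  rcases Nat.eq_zero_or_pos k with hk0 | hk1
  · left
    have hpbot : p = ⊥ := Submodule.finrank_eq_zero.mp hk0
    have hf0 : f = 0 := LinearMap.ext fun x => by
      have := hp.map_mem x
      rw [hpbot, Submodule.mem_bot] at this
      simpa using this
    have hq : q = LinearMap.toMatrix' f := by rw [hf, LinearMap.toMatrix'_toLin']
    rw [hq, hf0]
    exact LinearEquiv.map_zero _
  · rcases eq_or_lt_of_le hle with hkn | hkn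
    · right; left
      have hptop : p = ⊤ := by
        apply Submodule.eq_top_of_finrank_eq
        rw [← hk, hkn]; simp
      have hfid : f = LinearMap.id := LinearMap.ext fun x =>
        hp.map_id x (hptop ▸ Submodule.mem_top)
      have : q = LinearMap.toMatrix' f := by rw [hf, LinearMap.toMatrix'_toLin']
      rw [this, hfid]
      simp
    · right; right
      exact ⟨k, hk1, by omega, htr⟩


open Finset in
/-- A diagonal matrix `d` is the diagonal of an idempotent in `M_n(ℂ)` iff `d = 0`,
`d = id`, or `Tr d` is an integer in `{1, …, n-1}`. -/
theorem diagonal_of_idempotent_iff (n : ℕ) (d : Fin n → ℂ) :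
    (∃ q : Matrix (Fin n) (Fin n) ℂ, q * q = q ∧ ∀ i, q i i = d i) ↔
      (∀ i, d i = 0) ∨ (∀ i, d i = 1) ∨
        (∃ k : ℕ, 1 ≤ k ∧ k ≤ n - 1 ∧ ∑ i, d i = k) := by
  constructor
  · rintro ⟨q, hq, hd⟩
    rcases idem_trace n q hq with h0 | h1 | ⟨k, hk1, hkn, htr⟩
    · left
      intro i
      rw [← hd i, h0]
      rfl
    · right; left
      intro i
      rw [← hd i, h1, Matrix.one_apply_eq]
    · right; right
      refine ⟨k, hk1, hkn, ?_⟩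
      rw [← htr]
      simp only [Matrix.trace, Matrix.diag]
      exact Finset.sum_congr rfl fun i _ => (hd i).symm
  · rintro (h0 | h1 | ⟨k, hk1, hkn, hsum⟩)
    · exact ⟨0, by rw [mul_zero], fun i => by rw [h0 i]; rfl⟩
    · exact ⟨1, by rw [mul_one], fun i => by rw [h1 i, Matrix.one_apply_eq]⟩
    · have hkn' : k < n := by omega
      exact exists_idem_diag n k hk1 hkn' d hsum
end

section
/- For every diagonal matrix d in D_n(ℂ), the set of idempotent matrices q in M_n(ℂ) with E(q) = d is path-connected (possibly empty). -/
open Matrix Finset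
noncomputable section

namespace IdemDiag

variable {n : ℕ}

/-- coordinate projection matrix for a subset T -/
def pm (T : Finset (Fin n)) : Matrix (Fin n) (Fin n) ℂ :=
  Matrix.diagonal (fun i => if i ∈ T then 1 else 0)

lemma pm_idem (T : Finset (Fin n)) : pm T * pm T = pm T := by
  ext i j
  rw [pm, Matrix.diagonal_mul_diagonal]
  by_cases h : i ∈ T <;> simp [Matrix.diagonal_apply, h]

/-- support hypotheses on the parameters C, D -/
structure Supp (T : Finset (Fin n)) (C D : Matrix (Fin n) (Fin n) ℂ) : Prop where
  hC : ∀ i j, i ∈ T ∨ j ∉ T → C i j = 0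
  hD : ∀ i j, i ∉ T ∨ j ∈ T → D i j = 0

variable {T : Finset (Fin n)} {C D : Matrix (Fin n) (Fin n) ℂ}

lemma Supp.pmC (h : Supp T C D) : pm T * C = 0 := by
  ext i j
  rw [pm, Matrix.diagonal_mul]
  by_cases hi : i ∈ T
  · simp [h.hC i j (Or.inl hi)]
  · simp [hi]

lemma Supp.Cpm (h : Supp T C D) : C * pm T = C := by
  ext i j
  rw [pm, Matrix.mul_diagonal]
  by_cases hj : j ∈ T
  · simp [hj]
  · simp [hj, h.hC i j (Or.inr hj)]

lemma Supp.pmD (h : Supp T C D) : pm T * D = D := by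
  ext i j
  rw [pm, Matrix.diagonal_mul]
  by_cases hi : i ∈ T
  · simp [hi]
  · simp [hi, h.hD i j (Or.inl hi)]

lemma Supp.Dpm (h : Supp T C D) : D * pm T = 0 := by
  ext i j
  rw [pm, Matrix.mul_diagonal]
  by_cases hj : j ∈ T
  · simp [h.hD i j (Or.inr hj)]
  · simp [hj]

lemma Supp.CC (h : Supp T C D) : C * C = 0 := by
  calc C * C = C * pm T * C := by rw [h.Cpm]
  _ = C * (pm T * C) := by rw [Matrix.mul_assoc]
  _ = 0 := by rw [h.pmC, Matrix.mul_zero]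

/-- the cell parametrization -/
def Phi (T : Finset (Fin n)) (C D : Matrix (Fin n) (Fin n) ℂ) : Matrix (Fin n) (Fin n) ℂ :=
  (pm T + C) * (pm T - D * C + D)

lemma WV (h : Supp T C D) :
    (pm T - D * C + D) * (pm T + C) = pm T := by
  have e1 : D * C * pm T = D * C := by rw [Matrix.mul_assoc, h.Cpm]
  have e2 : D * C * C = 0 := by rw [Matrix.mul_assoc, h.CC, Matrix.mul_zero]
  rw [Matrix.add_mul, Matrix.sub_mul, Matrix.mul_add, Matrix.mul_add, Matrix.mul_add]
  rw [pm_idem, h.pmC, h.Dpm, e1, e2]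
  simp

lemma phi_idem (h : Supp T C D) :
    Phi T C D * Phi T C D = Phi T C D := by
  have e3 : pm T * (D * C) = D * C := by rw [← Matrix.mul_assoc, h.pmD]
  have hpmW : pm T * (pm T - D * C + D) = pm T - D * C + D := by
    rw [Matrix.mul_add, Matrix.mul_sub, pm_idem, h.pmD, e3]
  calc Phi T C D * Phi T C D
      = (pm T + C) * ((pm T - D * C + D) * (pm T + C) * (pm T - D * C + D)) := by
        simp only [Phi, Matrix.mul_assoc]
    _ = (pm T + C) * (pm T * (pm T - D * C + D)) := by rw [WV h]
    _ = Phi T C D := by rw [hpmW]; rfl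

lemma phi_expand (h : Supp T C D) :
    Phi T C D = pm T - D * C + D + C - C * (D * C) + C * D := by
  have e3 : pm T * (D * C) = D * C := by rw [← Matrix.mul_assoc, h.pmD]
  rw [Phi, Matrix.add_mul, Matrix.mul_add, Matrix.mul_add, Matrix.mul_sub, Matrix.mul_sub,
    pm_idem, h.pmD, h.Cpm, e3]
  abel

lemma phi_diag (h : Supp T C D) (i : Fin n) :
    Phi T C D i i = (if i ∈ T then 1 else 0) + ∑ j, (C i j * D j i - D i j * C j i) := by
  have hC0 : C i i = 0 := by
    by_cases hi : i ∈ T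
    · exact h.hC i i (Or.inl hi)
    · exact h.hC i i (Or.inr hi)
  have hD0 : D i i = 0 := by
    by_cases hi : i ∈ T
    · exact h.hD i i (Or.inr hi)
    · exact h.hD i i (Or.inl hi)
  have hCDC : (C * (D * C)) i i = 0 := by
    rw [Matrix.mul_apply]
    apply Finset.sum_eq_zero
    intro j _
    by_cases hi : i ∈ T
    · rw [h.hC i j (Or.inl hi), zero_mul]
    · have hz : (D * C) j i = 0 := by
        rw [Matrix.mul_apply]
        apply Finset.sum_eq_zero
        intro l _
        rw [h.hC l i (Or.inr hi), mul_zero]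
      rw [hz, mul_zero]
  have expand := phi_expand h
  have : Phi T C D i i = pm T i i - (D * C) i i + D i i + C i i - (C * (D * C)) i i
      + (C * D) i i := by rw [expand]; rfl
  rw [this, hCDC, hC0, hD0]
  rw [Matrix.mul_apply, Matrix.mul_apply]
  rw [pm, Matrix.diagonal_apply_eq]
  rw [Finset.sum_sub_distrib]
  ring

lemma phi_trace (h : Supp T C D) : (Phi T C D).trace = (T.card : ℂ) := by
  have : (Phi T C D).trace = ((pm T - D * C + D) * (pm T + C)).trace :=
    Matrix.trace_mul_comm _ _
  rw [this, WV h, pm, Matrix.trace_diagonal]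
  rw [Finset.sum_ite_mem, Finset.univ_inter]
  simp


lemma pmW {T : Finset (Fin n)} {C D : Matrix (Fin n) (Fin n) ℂ} (h : Supp T C D) :
    pm T * (pm T - D * C + D) = pm T - D * C + D := by
  have e3 : pm T * (D * C) = D * C := by rw [← Matrix.mul_assoc, h.pmD]
  rw [Matrix.mul_add, Matrix.mul_sub, pm_idem, h.pmD, e3]

lemma phi_mul_V {T : Finset (Fin n)} {C D : Matrix (Fin n) (Fin n) ℂ} (h : Supp T C D) :
    Phi T C D * (pm T + C) = (pm T + C) * pm T := by
  rw [Phi, Matrix.mul_assoc, WV h]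

lemma pm_mulVec (T : Finset (Fin n)) (x : Fin n → ℂ) (i : Fin n) :
    (pm T).mulVec x i = if i ∈ T then x i else 0 := by
  rw [pm, Matrix.mulVec_diagonal]
  by_cases h : i ∈ T <;> simp [h]

lemma pm_mulVec_single (T : Finset (Fin n)) {i : Fin n} (hi : i ∈ T) :
    (pm T).mulVec (Pi.single i 1) = Pi.single i 1 := by
  funext a
  rw [pm_mulVec]
  by_cases ha : a ∈ T
  · simp [ha]
  · rw [if_neg ha]
    have : a ≠ i := fun h => ha (h ▸ hi)
    simp [Pi.single_eq_of_ne this]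

lemma pm_mul_apply (T : Finset (Fin n)) (M : Matrix (Fin n) (Fin n) ℂ) (i j : Fin n) :
    (pm T * M) i j = if i ∈ T then M i j else 0 := by
  rw [pm, Matrix.diagonal_mul]
  by_cases h : i ∈ T <;> simp [h]

lemma mul_pm_apply (T : Finset (Fin n)) (M : Matrix (Fin n) (Fin n) ℂ) (i j : Fin n) :
    (M * pm T) i j = if j ∈ T then M i j else 0 := by
  rw [pm, Matrix.mul_diagonal]
  by_cases h : j ∈ T <;> simp [h]

/-- The factorization lemma: under transversality, an idempotent lies in cell T. -/
lemma fact (q : Matrix (Fin n) (Fin n) ℂ) (T : Finset (Fin n))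
    (hq : q * q = q)
    (h1 : ∀ x : Fin n → ℂ, q.mulVec x = x → (pm T).mulVec x = 0 → x = 0)
    (h2 : ∀ y : Fin n → ℂ, (pm T).mulVec y = y → ∃ x, q.mulVec x = x ∧ (pm T).mulVec x = y) :
    ∃ C D, Supp T C D ∧ q = Phi T C D := by
  classical
  -- choose fixed preimages of the basis vectors in T
  have hsel : ∀ i : {i : Fin n // i ∈ T}, ∃ x, q.mulVec x = x ∧
      (pm T).mulVec x = Pi.single (i : Fin n) 1 :=
    fun i => h2 _ (pm_mulVec_single T i.2)
  choose xx hxq hxp using hsel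
  set V0 : Matrix (Fin n) (Fin n) ℂ :=
    Matrix.of (fun a i => if h : i ∈ T then xx ⟨i, h⟩ a else 0) with hV0
  -- column view
  have colV0 : ∀ i : Fin n, (fun a => V0 a i) =
      (if h : i ∈ T then xx ⟨i, h⟩ else 0) := by
    intro i
    by_cases h : i ∈ T
    · funext a; simp [hV0, h]
    · funext a; simp [hV0, h]
  have hqV0 : q * V0 = V0 := by
    ext a i
    have : (q * V0) a i = q.mulVec (fun b => V0 b i) a := by
      rw [Matrix.mul_apply, Matrix.mulVec]
      rfl
    rw [this, colV0 i]
    by_cases h : i ∈ T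
    · rw [dif_pos h, hxq ⟨i, h⟩]
      simp [hV0, h]
    · rw [dif_neg h]
      simp [hV0, h, Matrix.mulVec_zero]
  have hpmV0 : pm T * V0 = pm T := by
    ext a i
    have : (pm T * V0) a i = (pm T).mulVec (fun b => V0 b i) a := by
      rw [Matrix.mul_apply, Matrix.mulVec]
      rfl
    rw [this, colV0 i]
    by_cases h : i ∈ T
    · rw [dif_pos h, hxp ⟨i, h⟩]
      rw [pm, Matrix.diagonal_apply]
      by_cases hai : a = i
      · subst hai; simp [h]
      · simp [hai, Pi.single_eq_of_ne hai]
    · rw [dif_neg h]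
      rw [pm, Matrix.diagonal_apply]
      by_cases hai : a = i
      · subst hai; simp [h, Matrix.mulVec_zero]
      · simp [hai, Matrix.mulVec_zero]
  have hV0pm : V0 * pm T = V0 := by
    ext a i
    rw [pm, Matrix.mul_diagonal]
    by_cases h : i ∈ T
    · simp [h]
    · simp [h, hV0]
  -- uniqueness of preimages
  have huniq : ∀ v : Fin n → ℂ, q.mulVec v = v →
      V0.mulVec ((pm T).mulVec v) = v := by
    intro v hv
    set z := V0.mulVec ((pm T).mulVec v) with hz
    have hqz : q.mulVec z = z := by
      rw [hz, Matrix.mulVec_mulVec, Matrix.mulVec_mulVec, hqV0, Matrix.mulVec_mulVec]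
    have hpz : (pm T).mulVec z = (pm T).mulVec v := by
      rw [hz, Matrix.mulVec_mulVec, Matrix.mulVec_mulVec, hpmV0, pm_idem]
    have hdiff : z - v = 0 := by
      apply h1
      · rw [Matrix.mulVec_sub, hqz, hv]
      · rw [Matrix.mulVec_sub, hpz, sub_self]
    have := sub_eq_zero.mp hdiff
    exact this
  refine ⟨V0 - pm T, pm T * q - pm T * q * pm T, ⟨?_, ?_⟩, ?_⟩
  · -- support of C
    intro i j hij
    rw [Matrix.sub_apply]
    rcases hij with hi | hj
    · by_cases hj : j ∈ T
      · have hcol := congrFun (hxp ⟨j, hj⟩) i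
        rw [pm_mulVec, if_pos hi] at hcol
        have hv : V0 i j = (Pi.single j 1 : Fin n → ℂ) i := by
          simp only [hV0, Matrix.of_apply, dif_pos hj]
          exact hcol
        rw [hv, pm, Matrix.diagonal_apply]
        by_cases hij' : i = j
        · subst hij'; simp [hi]
        · simp [hij', Pi.single_eq_of_ne hij']
      · have hv : V0 i j = 0 := by simp [hV0, hj]
        rw [hv, pm, Matrix.diagonal_apply]
        by_cases hij' : i = j
        · subst hij'; simp [hj]
        · simp [hij']
    · have hv : V0 i j = 0 := by simp [hV0, hj]
      rw [hv, pm, Matrix.diagonal_apply]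
      by_cases hij' : i = j
      · subst hij'; simp [hj]
      · simp [hij']
  · -- support of D
    intro i j hij
    rw [Matrix.sub_apply]
    rcases hij with hi | hj
    · rw [pm_mul_apply, if_neg hi, Matrix.mul_assoc, pm_mul_apply, if_neg hi, sub_zero]
    · rw [mul_pm_apply, if_pos hj, sub_self]
  · -- the factorization identity
    set C := V0 - pm T with hC
    set D := pm T * q - pm T * q * pm T with hD
    have hVeq : pm T + C = V0 := by rw [hC]; abel
    have h1m : pm T * (V0 - pm T) = 0 := by
      rw [Matrix.mul_sub, hpmV0, pm_idem, sub_self]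
    have hDC : D * C = pm T - pm T * q * pm T := by
      rw [hD, hC]
      rw [Matrix.sub_mul, Matrix.mul_sub, Matrix.mul_sub]
      have e1 : pm T * q * V0 = pm T := by
        rw [Matrix.mul_assoc (pm T) q V0, hqV0, hpmV0]
      have e2 : pm T * q * pm T * V0 = pm T * q * pm T := by
        rw [Matrix.mul_assoc (pm T * q) (pm T) V0, hpmV0]
      have e3 : pm T * q * pm T * pm T = pm T * q * pm T := by
        rw [Matrix.mul_assoc (pm T * q) (pm T) (pm T), pm_idem]
      rw [e1, e2, e3]
      abel
    have hW : pm T - D * C + D = pm T * q := by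
      rw [hDC, hD]; abel
    have key : ∀ w, (V0 * (pm T * q)) *ᵥ w = q *ᵥ w := by
      intro w
      rw [← Matrix.mulVec_mulVec, ← Matrix.mulVec_mulVec]
      exact huniq (q *ᵥ w) (by rw [Matrix.mulVec_mulVec, hq])
    have final : V0 * (pm T * q) = q := by
      ext a j
      have h1' := congrFun (key (Pi.single j 1)) a
      rw [Matrix.mulVec_single, Matrix.mulVec_single] at h1'
      simpa using h1'
    rw [Phi, hVeq, hW, final]

lemma ext_exists (q : Matrix (Fin n) (Fin n) ℂ) (hq : q * q = q) :
    ∃ T : Finset (Fin n),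
      (∀ x, q.mulVec x = x → (pm T).mulVec x = 0 → x = 0) ∧
      (∀ y, (pm T).mulVec y = y → ∃ x, q.mulVec x = x ∧ (pm T).mulVec x = y) := by
  classical
  set F : Submodule ℂ (Fin n → ℂ) := LinearMap.ker (q.mulVecLin - LinearMap.id) with hF
  have memF : ∀ x, x ∈ F ↔ q.mulVec x = x := by
    intro x
    rw [hF, LinearMap.mem_ker, LinearMap.sub_apply, LinearMap.id_apply, sub_eq_zero,
      Matrix.mulVecLin_apply]
  obtain ⟨b, hbF, hbspan, hbind⟩ := exists_linearIndependent ℂ (F : Set (Fin n → ℂ))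
  have hbspanF : Submodule.span ℂ b = F := by rw [hbspan, Submodule.span_eq]
  set sing : Set (Fin n → ℂ) := Set.range (fun j : Fin n => (Pi.single j 1 : Fin n → ℂ))
    with hsing
  have hsub : b ⊆ b ∪ sing := Set.subset_union_left
  have hbind' : LinearIndepOn ℂ id b := hbind
  set B := hbind'.extend hsub with hB
  have hBsub : B ⊆ b ∪ sing := hbind'.extend_subset hsub
  have hbB : b ⊆ B := hbind'.subset_extend hsub
  have hBspan : Submodule.span ℂ B = ⊤ := by
    have h1 : (b ∪ sing) ⊆ (Submodule.span ℂ B : Set (Fin n → ℂ)) :=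
      hbind'.subset_span_extend hsub
    rw [eq_top_iff]
    intro x _
    have hx : x = ∑ j : Fin n, Pi.single j (x j) := by
      rw [Finset.univ_sum_single]
    rw [hx]
    apply Submodule.sum_mem
    intro j _
    have : Pi.single j (x j) = x j • (Pi.single j 1 : Fin n → ℂ) := by
      rw [← Pi.single_smul]
      simp
    rw [this]
    exact Submodule.smul_mem _ _ (h1 (Set.mem_union_right _ ⟨j, rfl⟩))
  have hBind : LinearIndependent ℂ ((↑) : B → (Fin n → ℂ)) :=
    hbind'.linearIndepOn_extend hsub
  set E := B \ b with hE
  have hEsing : E ⊆ sing := fun x hx => (hBsub hx.1).resolve_left hx.2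
  set T : Finset (Fin n) :=
    Finset.univ.filter (fun j => (Pi.single j 1 : Fin n → ℂ) ∉ E) with hT
  have hmemT : ∀ j : Fin n, j ∉ T ↔ (Pi.single j 1 : Fin n → ℂ) ∈ E := by
    intro j
    simp [hT]
  have hdisj : Disjoint (Submodule.span ℂ b) (Submodule.span ℂ E) := by
    have h := hBind.disjoint_span_image
      (s := (Subtype.val : B → (Fin n → ℂ)) ⁻¹' b)
      (t := (Subtype.val : B → (Fin n → ℂ)) ⁻¹' E)
      (Set.disjoint_sdiff_right.preimage _)
    have e1 : (Subtype.val : B → (Fin n → ℂ)) '' ((Subtype.val : B → (Fin n → ℂ)) ⁻¹' b) = b := by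
      rw [Subtype.image_preimage_coe]
      exact Set.inter_eq_self_of_subset_right hbB
    have e2 : (Subtype.val : B → (Fin n → ℂ)) '' ((Subtype.val : B → (Fin n → ℂ)) ⁻¹' E) = E := by
      rw [Subtype.image_preimage_coe]
      exact Set.inter_eq_self_of_subset_right Set.diff_subset
    rwa [e1, e2] at h
  have hspanE_ker : Submodule.span ℂ E ≤ LinearMap.ker (pm T).mulVecLin := by
    rw [Submodule.span_le]
    intro v hv
    obtain ⟨j, rfl⟩ := hEsing hv
    have hjT : j ∉ T := (hmemT j).mpr hv
    simp only [SetLike.mem_coe, LinearMap.mem_ker, Matrix.mulVecLin_apply]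
    funext a
    rw [pm_mulVec]
    by_cases ha : a ∈ T
    · rw [if_pos ha]
      have : a ≠ j := fun h => hjT (h ▸ ha)
      exact Pi.single_eq_of_ne this 1
    · rw [if_neg ha]
      simp
  refine ⟨T, ?_, ?_⟩
  · intro x hx hpx
    have hxF : x ∈ F := (memF x).mpr hx
    have hxE : x ∈ Submodule.span ℂ E := by
      have hx0 : ∀ i ∈ T, x i = 0 := by
        intro i hi
        have := congrFun hpx i
        rw [pm_mulVec, if_pos hi] at this
        exact this
      have hxsum : x = ∑ j : Fin n, Pi.single j (x j) := by
        rw [Finset.univ_sum_single]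
      rw [hxsum]
      apply Submodule.sum_mem
      intro j _
      by_cases hj : j ∈ T
      · rw [hx0 j hj]
        simp
      · have : Pi.single j (x j) = x j • (Pi.single j 1 : Fin n → ℂ) := by
          rw [← Pi.single_smul]; simp
        rw [this]
        exact Submodule.smul_mem _ _ (Submodule.subset_span ((hmemT j).mp hj))
    have hxb : x ∈ Submodule.span ℂ b := by rw [hbspanF]; exact hxF
    exact Submodule.disjoint_def.mp hdisj x hxb hxE
  · intro y hy
    have hyB : y ∈ Submodule.span ℂ (b ∪ E) := by
      have : b ∪ E = B := Set.union_diff_cancel hbB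
      rw [this, hBspan]
      trivial
    rw [Submodule.span_union] at hyB
    obtain ⟨f, hf, z, hz, hfz⟩ := Submodule.mem_sup.mp hyB
    have hfF : q.mulVec f = f := (memF f).mp (hbspanF ▸ hf)
    have hpz : (pm T).mulVec z = 0 := by
      have := hspanE_ker hz
      rwa [LinearMap.mem_ker, Matrix.mulVecLin_apply] at this
    refine ⟨f, hfF, ?_⟩
    have : (pm T).mulVec y = (pm T).mulVec f + (pm T).mulVec z := by
      rw [← Matrix.mulVec_add, hfz]
    rw [hy, hpz, add_zero] at this
    exact this.symm


/-- the target set -/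
def SS (d : Fin n → ℂ) : Set (Matrix (Fin n) (Fin n) ℂ) :=
  {q : Matrix (Fin n) (Fin n) ℂ | q * q = q ∧ ∀ i, q i i = d i}

/-- diagonal condition on parameters -/
def Cond (T : Finset (Fin n)) (d : Fin n → ℂ) (C D : Matrix (Fin n) (Fin n) ℂ) : Prop :=
  ∀ i, (if i ∈ T then (1:ℂ) else 0) + ∑ j, (C i j * D j i - D i j * C j i) = d i

variable {T : Finset (Fin n)} {d : Fin n → ℂ} {C D : Matrix (Fin n) (Fin n) ℂ}

lemma phi_mem (h : Supp T C D) (hc : Cond T d C D) : Phi T C D ∈ SS d :=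
  ⟨phi_idem h, fun i => by rw [phi_diag h]; exact hc i⟩

lemma cond_of_mem (h : Supp T C D) (hm : Phi T C D ∈ SS d) : Cond T d C D := by
  intro i
  rw [← phi_diag h]
  exact hm.2 i

/-- all-ones matrix on the C-support -/
def UU (T : Finset (Fin n)) : Matrix (Fin n) (Fin n) ℂ :=
  Matrix.of fun i j => if i ∉ T ∧ j ∈ T then 1 else 0

/-- canonical D-parameter recording the entrywise products -/
def sig (T : Finset (Fin n)) (C D : Matrix (Fin n) (Fin n) ℂ) : Matrix (Fin n) (Fin n) ℂ :=
  Matrix.of fun i j => if i ∈ T ∧ j ∉ T then D i j * C j i else 0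

lemma supp_U_sig (T : Finset (Fin n)) (C D : Matrix (Fin n) (Fin n) ℂ) :
    Supp T (UU T) (sig T C D) := by
  constructor
  · intro i j hij
    simp only [UU, Matrix.of_apply, ite_eq_right_iff]
    intro h'; exfalso; rcases hij with h | h
    · exact h'.1 h
    · exact h h'.2
  · intro i j hij
    simp only [sig, Matrix.of_apply, ite_eq_right_iff]
    intro h'; exfalso; rcases hij with h | h
    · exact h h'.1
    · exact h'.2 h

/-- a JoinedIn constructor from a real-parametrized path -/
lemma joinedIn_of {X : Type*} [TopologicalSpace X] {S : Set X} {f : ℝ → X}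
    (hf : Continuous f) (hmem : ∀ t, f t ∈ S) : JoinedIn S (f 0) (f 1) := by
  refine ⟨⟨⟨fun t => f ((t : unitInterval) : ℝ), hf.comp continuous_subtype_val⟩, ?_, ?_⟩,
    fun t => hmem _⟩
  · simp
  · simp

open Classical in
/-- phase A1 : C-part -/
def CA1 (T : Finset (Fin n)) (C D : Matrix (Fin n) (Fin n) ℂ) (s : ℝ) :
    Matrix (Fin n) (Fin n) ℂ :=
  Matrix.of fun a b => if a ∉ T ∧ b ∈ T then
    (if D b a * C a b = 0 then C a b else Complex.exp ((1 - (s:ℂ)) * Complex.log (C a b)))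
    else 0

open Classical in
/-- phase A1 : D-part -/
def DA1 (T : Finset (Fin n)) (C D : Matrix (Fin n) (Fin n) ℂ) (s : ℝ) :
    Matrix (Fin n) (Fin n) ℂ :=
  Matrix.of fun i j => if i ∈ T ∧ j ∉ T then
    (if D i j * C j i = 0 then (1 - (s:ℂ)) * D i j else D i j * Complex.exp ((s:ℂ) * Complex.log (C j i)))
    else 0

open Classical in
/-- phase A2 : C-part -/
def CA2 (T : Finset (Fin n)) (C D : Matrix (Fin n) (Fin n) ℂ) (s : ℝ) :
    Matrix (Fin n) (Fin n) ℂ :=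
  Matrix.of fun a b => if a ∉ T ∧ b ∈ T then
    (if D b a * C a b = 0 then (1 - (s:ℂ)) * C a b + (s:ℂ) else 1)
    else 0

lemma supp_A1 (T : Finset (Fin n)) (C D : Matrix (Fin n) (Fin n) ℂ) (s : ℝ) :
    Supp T (CA1 T C D s) (DA1 T C D s) := by
  constructor
  · intro i j hij
    simp only [CA1, Matrix.of_apply, ite_eq_right_iff]
    intro h'; exfalso; rcases hij with h | h
    · exact h'.1 h
    · exact h h'.2
  · intro i j hij
    simp only [DA1, Matrix.of_apply, ite_eq_right_iff]
    intro h'; exfalso; rcases hij with h | h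
    · exact h h'.1
    · exact h'.2 h

lemma supp_A2 (T : Finset (Fin n)) (C D : Matrix (Fin n) (Fin n) ℂ) (s : ℝ) :
    Supp T (CA2 T C D s) (sig T C D) := by
  constructor
  · intro i j hij
    simp only [CA2, Matrix.of_apply, ite_eq_right_iff]
    intro h'; exfalso; rcases hij with h | h
    · exact h'.1 h
    · exact h h'.2
  · exact (supp_U_sig T C D).hD

/-- key: entrywise products are preserved along phase A1 -/
lemma prods_A1 (h : Supp T C D) (s : ℝ) (i j : Fin n) :
    CA1 T C D s i j * DA1 T C D s j i = C i j * D j i ∧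
    DA1 T C D s i j * CA1 T C D s j i = D i j * C j i := by
  constructor
  · by_cases hij : i ∉ T ∧ j ∈ T
    · have hd : (j ∈ T ∧ i ∉ T) := ⟨hij.2, hij.1⟩
      simp only [CA1, DA1, Matrix.of_apply, if_pos hij, if_pos hd]
      by_cases hp : D j i * C i j = 0
      · rw [if_pos hp, if_pos hp]
        have e : C i j * D j i = 0 := by rw [mul_comm]; exact hp
        linear_combination (-(s:ℂ)) * e
      · rw [if_neg hp, if_neg hp]
        have hc : C i j ≠ 0 := fun h0 => hp (by rw [h0, mul_zero])
        have heq : (1 - (s:ℂ)) * Complex.log (C i j) + (s:ℂ) * Complex.log (C i j)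
            = Complex.log (C i j) := by ring
        rw [mul_comm (D j i) (Complex.exp ((s:ℂ) * Complex.log (C i j))), ← mul_assoc,
          ← Complex.exp_add, heq, Complex.exp_log hc]
    · have hc0 : C i j = 0 := by
        rcases not_and_or.mp hij with h' | h'
        · exact h.hC i j (Or.inl (not_not.mp h'))
        · exact h.hC i j (Or.inr h')
      simp only [CA1, Matrix.of_apply, if_neg hij, hc0, zero_mul]
  · by_cases hij : i ∈ T ∧ j ∉ T
    · have hc : (j ∉ T ∧ i ∈ T) := ⟨hij.2, hij.1⟩
      simp only [CA1, DA1, Matrix.of_apply, if_pos hij, if_pos hc]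
      by_cases hp : D i j * C j i = 0
      · rw [if_pos hp, if_pos hp]
        linear_combination (-(s:ℂ)) * hp
      · rw [if_neg hp, if_neg hp]
        have hcj : C j i ≠ 0 := fun h0 => hp (by rw [h0, mul_zero])
        have heq : (s:ℂ) * Complex.log (C j i) + (1 - (s:ℂ)) * Complex.log (C j i)
            = Complex.log (C j i) := by ring
        rw [mul_assoc, ← Complex.exp_add, heq, Complex.exp_log hcj]
    · have hd0 : D i j = 0 := by
        rcases not_and_or.mp hij with h' | h'
        · exact h.hD i j (Or.inl h')
        · exact h.hD i j (Or.inr (not_not.mp h'))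
      simp only [DA1, Matrix.of_apply, if_neg hij, hd0, zero_mul]

/-- products along phase A2 -/
lemma prods_A2 (h : Supp T C D) (s : ℝ) (i j : Fin n) :
    CA2 T C D s i j * sig T C D j i = C i j * D j i ∧
    sig T C D i j * CA2 T C D s j i = D i j * C j i := by
  constructor
  · by_cases hij : i ∉ T ∧ j ∈ T
    · have hd : (j ∈ T ∧ i ∉ T) := ⟨hij.2, hij.1⟩
      simp only [CA2, sig, Matrix.of_apply, if_pos hij, if_pos hd]
      by_cases hp : D j i * C i j = 0
      · rw [if_pos hp, hp, mul_zero, mul_comm]; exact hp.symm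
      · rw [if_neg hp, one_mul, mul_comm]
    · have hc0 : C i j = 0 := by
        rcases not_and_or.mp hij with h' | h'
        · exact h.hC i j (Or.inl (not_not.mp h'))
        · exact h.hC i j (Or.inr h')
      simp only [CA2, Matrix.of_apply, if_neg hij, hc0, zero_mul]
  · by_cases hij : i ∈ T ∧ j ∉ T
    · have hc : (j ∉ T ∧ i ∈ T) := ⟨hij.2, hij.1⟩
      simp only [CA2, sig, Matrix.of_apply, if_pos hij, if_pos hc]
      by_cases hp : D i j * C j i = 0
      · rw [if_pos hp, hp, zero_mul]
      · rw [if_neg hp, mul_one]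
    · have hd0 : D i j = 0 := by
        rcases not_and_or.mp hij with h' | h'
        · exact h.hD i j (Or.inl h')
        · exact h.hD i j (Or.inr (not_not.mp h'))
      simp only [sig, Matrix.of_apply, if_neg hij, hd0, zero_mul]

/-- transfer of the diagonal condition along product-preserving deformations -/
lemma cond_congr {C' D' : Matrix (Fin n) (Fin n) ℂ}
    (hp : ∀ i j, C' i j * D' j i = C i j * D j i ∧ D' i j * C' j i = D i j * C j i)
    (hc : Cond T d C D) : Cond T d C' D' := by
  intro i
  rw [← hc i]
  congr 1
  apply Finset.sum_congr rfl
  intro j _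
  rw [(hp i j).1, (hp i j).2]

lemma CA1_zero (h : Supp T C D) : CA1 T C D 0 = C := by
  ext i j
  simp only [CA1, Matrix.of_apply]
  by_cases hij : i ∉ T ∧ j ∈ T
  · rw [if_pos hij]
    by_cases hp : D j i * C i j = 0
    · rw [if_pos hp]
    · rw [if_neg hp]
      have hc : C i j ≠ 0 := fun h0 => hp (by rw [h0, mul_zero])
      push_cast
      rw [sub_zero, one_mul, Complex.exp_log hc]
  · rw [if_neg hij]
    rcases not_and_or.mp hij with h' | h'
    · exact (h.hC i j (Or.inl (not_not.mp h'))).symm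
    · exact (h.hC i j (Or.inr h')).symm

lemma DA1_zero (h : Supp T C D) : DA1 T C D 0 = D := by
  ext i j
  simp only [DA1, Matrix.of_apply]
  by_cases hij : i ∈ T ∧ j ∉ T
  · rw [if_pos hij]
    by_cases hp : D i j * C j i = 0
    · rw [if_pos hp]; push_cast; rw [sub_zero, one_mul]
    · rw [if_neg hp]; push_cast; rw [zero_mul, Complex.exp_zero, mul_one]
  · rw [if_neg hij]
    rcases not_and_or.mp hij with h' | h'
    · exact (h.hD i j (Or.inl h')).symm
    · exact (h.hD i j (Or.inr (not_not.mp h'))).symm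

lemma CA1_one : CA1 T C D 1 = CA2 T C D 0 := by
  ext i j
  simp only [CA1, CA2, Matrix.of_apply]
  by_cases hij : i ∉ T ∧ j ∈ T
  · rw [if_pos hij, if_pos hij]
    by_cases hp : D j i * C i j = 0
    · rw [if_pos hp, if_pos hp]; push_cast; rw [sub_zero, one_mul, add_zero]
    · rw [if_neg hp, if_neg hp]; push_cast; rw [sub_self, zero_mul, Complex.exp_zero]
  · rw [if_neg hij, if_neg hij]

lemma DA1_one : DA1 T C D 1 = sig T C D := by
  ext i j
  simp only [DA1, sig, Matrix.of_apply]
  by_cases hij : i ∈ T ∧ j ∉ T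
  · rw [if_pos hij, if_pos hij]
    by_cases hp : D i j * C j i = 0
    · rw [if_pos hp, hp]; push_cast; rw [sub_self, zero_mul]
    · rw [if_neg hp]
      have hc : C j i ≠ 0 := fun h0 => hp (by rw [h0, mul_zero])
      push_cast
      rw [one_mul, Complex.exp_log hc]
  · rw [if_neg hij, if_neg hij]

lemma CA2_one : CA2 T C D 1 = UU T := by
  ext i j
  simp only [CA2, UU, Matrix.of_apply]
  by_cases hij : i ∉ T ∧ j ∈ T
  · rw [if_pos hij, if_pos hij]
    by_cases hp : D j i * C i j = 0
    · rw [if_pos hp]; push_cast; rw [sub_self, zero_mul, zero_add]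
    · rw [if_neg hp]
  · rw [if_neg hij, if_neg hij]

lemma cont_CA1 : Continuous (CA1 T C D) := by
  apply continuous_matrix
  intro i j
  simp only [CA1, Matrix.of_apply]
  by_cases hij : i ∉ T ∧ j ∈ T
  · simp only [if_pos hij]
    by_cases hp : D j i * C i j = 0
    · simp only [if_pos hp]; exact continuous_const
    · simp only [if_neg hp]
      exact Complex.continuous_exp.comp
        (((continuous_const.sub Complex.continuous_ofReal).mul continuous_const))
  · simp only [if_neg hij]; exact continuous_const

lemma cont_DA1 : Continuous (DA1 T C D) := by
  apply continuous_matrix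
  intro i j
  simp only [DA1, Matrix.of_apply]
  by_cases hij : i ∈ T ∧ j ∉ T
  · simp only [if_pos hij]
    by_cases hp : D i j * C j i = 0
    · simp only [if_pos hp]
      exact (continuous_const.sub Complex.continuous_ofReal).mul continuous_const
    · simp only [if_neg hp]
      exact continuous_const.mul (Complex.continuous_exp.comp
        (Complex.continuous_ofReal.mul continuous_const))
  · simp only [if_neg hij]; exact continuous_const

lemma cont_CA2 : Continuous (CA2 T C D) := by
  apply continuous_matrix
  intro i j
  simp only [CA2, Matrix.of_apply]
  by_cases hij : i ∉ T ∧ j ∈ T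
  · simp only [if_pos hij]
    by_cases hp : D j i * C i j = 0
    · simp only [if_pos hp]
      exact ((continuous_const.sub Complex.continuous_ofReal).mul continuous_const).add
        Complex.continuous_ofReal
    · simp only [if_neg hp]; exact continuous_const
  · simp only [if_neg hij]; exact continuous_const

lemma cont_phi {f g : ℝ → Matrix (Fin n) (Fin n) ℂ} (hf : Continuous f) (hg : Continuous g) :
    Continuous (fun s => Phi T (f s) (g s)) := by
  unfold Phi
  exact (continuous_const.add hf).matrix_mul
    ((continuous_const.sub (hg.matrix_mul hf)).add hg)

/-- joined within a cell : every point reaches the canonical σ-point -/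
lemma joined_to_sigma (h : Supp T C D) (hc : Cond T d C D) :
    JoinedIn (SS d) (Phi T C D) (Phi T (UU T) (sig T C D)) := by
  have j1 : JoinedIn (SS d) (Phi T (CA1 T C D 0) (DA1 T C D 0))
      (Phi T (CA1 T C D 1) (DA1 T C D 1)) := by
    apply joinedIn_of (cont_phi cont_CA1 cont_DA1)
    intro s
    exact phi_mem (supp_A1 T C D s) (cond_congr (prods_A1 h s) hc)
  have j2 : JoinedIn (SS d) (Phi T (CA2 T C D 0) (sig T C D))
      (Phi T (CA2 T C D 1) (sig T C D)) := by
    apply joinedIn_of (cont_phi cont_CA2 continuous_const)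
    intro s
    exact phi_mem (supp_A2 T C D s) (cond_congr (prods_A2 h s) hc)
  rw [CA1_zero h, DA1_zero h] at j1
  rw [CA1_one, DA1_one] at j1
  rw [CA2_one] at j2
  exact j1.trans j2

/-- joined along the affine segment between two σ-points -/
lemma joined_B {P0 P1 : Matrix (Fin n) (Fin n) ℂ}
    (h0 : Supp T (UU T) P0) (h1 : Supp T (UU T) P1)
    (hc0 : Cond T d (UU T) P0) (hc1 : Cond T d (UU T) P1) :
    JoinedIn (SS d) (Phi T (UU T) P0) (Phi T (UU T) P1) := by
  have cont : Continuous (fun s : ℝ => Phi T (UU T) ((1 - (s:ℂ)) • P0 + (s:ℂ) • P1)) :=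
    cont_phi continuous_const
      (((continuous_const.sub Complex.continuous_ofReal).smul continuous_const).add
        (Complex.continuous_ofReal.smul continuous_const))
  have mem : ∀ s : ℝ, Phi T (UU T) ((1 - (s:ℂ)) • P0 + (s:ℂ) • P1) ∈ SS d := by
    intro s
    have hsupp : Supp T (UU T) ((1 - (s:ℂ)) • P0 + (s:ℂ) • P1) := by
      constructor
      · exact h0.hC
      · intro i j hij
        simp only [Matrix.add_apply, Matrix.smul_apply, h0.hD i j hij, h1.hD i j hij,
          smul_zero, add_zero]
    apply phi_mem hsupp
    intro i
    have e0 := hc0 i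
    have e1 := hc1 i
    have hsum : ∑ j, (UU T i j * ((1 - (s:ℂ)) • P0 + (s:ℂ) • P1) j i
        - ((1 - (s:ℂ)) • P0 + (s:ℂ) • P1) i j * UU T j i)
        = (1 - (s:ℂ)) * (∑ j, (UU T i j * P0 j i - P0 i j * UU T j i))
          + (s:ℂ) * (∑ j, (UU T i j * P1 j i - P1 i j * UU T j i)) := by
      rw [Finset.mul_sum, Finset.mul_sum, ← Finset.sum_add_distrib]
      apply Finset.sum_congr rfl
      intro j _
      simp only [Matrix.add_apply, Matrix.smul_apply, smul_eq_mul]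
      ring
    rw [hsum]
    linear_combination (1 - (s:ℂ)) * e0 + (s:ℂ) * e1
  have key := joinedIn_of (f := fun s : ℝ => Phi T (UU T) ((1 - (s:ℂ)) • P0 + (s:ℂ) • P1))
    cont mem
  have ee0 : (1 - ((0:ℝ):ℂ)) • P0 + ((0:ℝ):ℂ) • P1 = P0 := by norm_num
  have ee1 : (1 - ((1:ℝ):ℂ)) • P0 + ((1:ℝ):ℂ) • P1 = P1 := by norm_num
  simp only [ee0, ee1] at key
  exact key

/-- the main within-cell connectivity lemma -/
lemma cell_joined {C0 D0 C1 D1 : Matrix (Fin n) (Fin n) ℂ}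
    (h0 : Supp T C0 D0) (h1 : Supp T C1 D1)
    (hc0 : Cond T d C0 D0) (hc1 : Cond T d C1 D1) :
    JoinedIn (SS d) (Phi T C0 D0) (Phi T C1 D1) := by
  have s0 : Cond T d (UU T) (sig T C0 D0) := cond_congr (fun i j => by
    have := prods_A2 (C := C0) (D := D0) h0 1 i j
    rwa [CA2_one] at this) hc0
  have s1 : Cond T d (UU T) (sig T C1 D1) := cond_congr (fun i j => by
    have := prods_A2 (C := C1) (D := D1) h1 1 i j
    rwa [CA2_one] at this) hc1
  exact ((joined_to_sigma h0 hc0).trans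
    (joined_B (supp_U_sig T C0 D0) (supp_U_sig T C1 D1) s0 s1)).trans
    (joined_to_sigma h1 hc1).symm


section Bridge

variable (T T' : Finset (Fin n)) (hcard : T.card = T'.card)

/-- the matching between T'\T and T\T' -/
def tau (hcard : T.card = T'.card) : {x // x ∈ T' \ T} ≃ {x // x ∈ T \ T'} :=
  Finset.equivOfCardEq (by
    rw [Finset.card_sdiff_comm hcard.symm])

/-- the involution swapping T'\T and T\T' -/
def sigf (hcard : T.card = T'.card) : Fin n → Fin n := fun j =>
  if h : j ∈ T' \ T then (tau T T' hcard ⟨j, h⟩ : Fin n)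
  else if h' : j ∈ T \ T' then ((tau T T' hcard).symm ⟨j, h'⟩ : Fin n)
  else j

lemma sigf_pos1 {j : Fin n} (h : j ∈ T' \ T) :
    sigf T T' hcard j = (tau T T' hcard ⟨j, h⟩ : Fin n) := by
  simp only [sigf]; rw [dif_pos h]

lemma sigf_pos2 {j : Fin n} (h1 : j ∉ T' \ T) (h2 : j ∈ T \ T') :
    sigf T T' hcard j = ((tau T T' hcard).symm ⟨j, h2⟩ : Fin n) := by
  simp only [sigf]; rw [dif_neg h1, dif_pos h2]

lemma sigf_id {j : Fin n} (h1 : j ∉ T' \ T) (h2 : j ∉ T \ T') :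
    sigf T T' hcard j = j := by
  simp only [sigf]; rw [dif_neg h1, dif_neg h2]

lemma sigf_invol : Function.Involutive (sigf T T' hcard) := by
  intro j
  by_cases h : j ∈ T' \ T
  · have hm : (tau T T' hcard ⟨j, h⟩ : Fin n) ∈ T \ T' := (tau T T' hcard ⟨j, h⟩).2
    have hm' : (tau T T' hcard ⟨j, h⟩ : Fin n) ∉ T' \ T := by
      intro hc
      exact (Finset.mem_sdiff.mp hc).2 (Finset.mem_sdiff.mp hm).1
    rw [sigf_pos1 T T' hcard h, sigf_pos2 T T' hcard hm' hm]
    have : (⟨(tau T T' hcard ⟨j, h⟩ : Fin n), hm⟩ : {x // x ∈ T \ T'}) =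
        tau T T' hcard ⟨j, h⟩ := rfl
    rw [this, Equiv.symm_apply_apply]
  · by_cases h' : j ∈ T \ T'
    · have hm : ((tau T T' hcard).symm ⟨j, h'⟩ : Fin n) ∈ T' \ T :=
        ((tau T T' hcard).symm ⟨j, h'⟩).2
      rw [sigf_pos2 T T' hcard h h', sigf_pos1 T T' hcard hm]
      have : (⟨((tau T T' hcard).symm ⟨j, h'⟩ : Fin n), hm⟩ : {x // x ∈ T' \ T}) =
          (tau T T' hcard).symm ⟨j, h'⟩ := rfl
      rw [this, Equiv.apply_symm_apply]
    · rw [sigf_id T T' hcard h h', sigf_id T T' hcard h h']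

/-- the permutation matrix -/
def P0 (hcard : T.card = T'.card) : Matrix (Fin n) (Fin n) ℂ :=
  ((sigf_invol T T' hcard).toPerm _).permMatrix ℂ

lemma P0_apply (i j : Fin n) :
    P0 T T' hcard i j = if sigf T T' hcard i = j then 1 else 0 := by
  rw [P0, Equiv.Perm.permMatrix]
  simp [PEquiv.toMatrix_apply, Equiv.toPEquiv_apply, Function.Involutive.toPerm]

lemma P0_det : IsUnit (P0 T T' hcard).det := by
  rw [P0, Matrix.det_permutation]
  rcases Int.units_eq_one_or (Equiv.Perm.sign ((sigf_invol T T' hcard).toPerm _)) with h | h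
  · rw [h]; simp
  · rw [h]; simp


lemma mul_one_sub_pm_apply (S : Finset (Fin n)) (M : Matrix (Fin n) (Fin n) ℂ) (i j : Fin n) :
    (M * (1 - pm S)) i j = if j ∈ S then 0 else M i j := by
  rw [Matrix.mul_sub, Matrix.mul_one, Matrix.sub_apply, mul_pm_apply]
  by_cases h : j ∈ S <;> simp [h]

/-- base point of the C-perturbation -/
def C0m (hcard : T.card = T'.card) : Matrix (Fin n) (Fin n) ℂ :=
  Matrix.of fun i j => if h : i ∈ T' \ T then
    (if j = (tau T T' hcard ⟨i, h⟩ : Fin n) then 1 else 0) else 0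

/-- perturbed C parameter -/
def Cst (hcard : T.card = T'.card) (ε : ℝ) : Matrix (Fin n) (Fin n) ℂ :=
  C0m T T' hcard + (ε:ℂ) • UU T

/-- test matrix for transversality of the bridge cell w.r.t. T' -/
def G (hcard : T.card = T'.card) (ε : ℝ) : Matrix (Fin n) (Fin n) ℂ :=
  pm T' * (pm T + Cst T T' hcard ε) * pm T + P0 T T' hcard * (1 - pm T)

lemma G_zero : G T T' hcard 0 = P0 T T' hcard := by
  ext i j
  have h1 : G T T' hcard 0 i j = (pm T' * ((pm T + Cst T T' hcard 0) * pm T)) i j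
      + (P0 T T' hcard * (1 - pm T)) i j := by
    rw [G, Matrix.add_apply, Matrix.mul_assoc]
  rw [h1, pm_mul_apply, mul_pm_apply, mul_one_sub_pm_apply, P0_apply]
  have hCst : ∀ a b, Cst T T' hcard 0 a b = C0m T T' hcard a b := by
    intro a b
    simp [Cst]
  by_cases hj : j ∈ T
  · rw [if_pos hj, if_pos hj, add_zero]
    by_cases hi' : i ∈ T'
    · rw [if_pos hi', Matrix.add_apply, hCst]
      by_cases hiT : i ∈ T
      · have hC0 : C0m T T' hcard i j = 0 := by
          rw [C0m, Matrix.of_apply, dif_neg]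
          intro hc
          exact (Finset.mem_sdiff.mp hc).2 hiT
        have hsig : sigf T T' hcard i = i :=
          sigf_id T T' hcard (fun hc => (Finset.mem_sdiff.mp hc).2 hiT)
            (fun hc => (Finset.mem_sdiff.mp hc).2 hi')
        rw [hC0, add_zero, pm, Matrix.diagonal_apply, hsig]
        by_cases hij : i = j
        · subst hij; simp [hiT]
        · simp [hij]
      · have hd : i ∈ T' \ T := Finset.mem_sdiff.mpr ⟨hi', hiT⟩
        have hpm : pm T i j = 0 := by
          rw [pm, Matrix.diagonal_apply]
          by_cases hij : i = j
          · subst hij; simp [hiT]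
          · simp [hij]
        have hC0 : C0m T T' hcard i j
            = if j = (tau T T' hcard ⟨i, hd⟩ : Fin n) then 1 else 0 := by
          rw [C0m, Matrix.of_apply, dif_pos hd]
        rw [hpm, zero_add, hC0, sigf_pos1 T T' hcard hd]
        by_cases hij : (tau T T' hcard ⟨i, hd⟩ : Fin n) = j
        · rw [if_pos hij, if_pos hij.symm]
        · rw [if_neg hij, if_neg (fun hc => hij hc.symm)]
    · rw [if_neg hi']
      have hsig : sigf T T' hcard i ≠ j := by
        by_cases hiT : i ∈ T \ T'
        · rw [sigf_pos2 T T' hcard (fun hc => hi' (Finset.mem_sdiff.mp hc).1) hiT]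
          intro hc
          exact (Finset.mem_sdiff.mp ((tau T T' hcard).symm ⟨i, hiT⟩).2).2 (hc ▸ hj)
        · rw [sigf_id T T' hcard (fun hc => hi' (Finset.mem_sdiff.mp hc).1) hiT]
          intro hc
          exact hiT (Finset.mem_sdiff.mpr ⟨hc ▸ hj, hi'⟩)
      rw [if_neg hsig]
  · rw [if_neg hj, if_neg hj]
    have : (if i ∈ T' then (0:ℂ) else 0) = 0 := by simp
    rw [this, zero_add]

lemma exists_eps : ∃ ε : ℝ, 0 < ε ∧ IsUnit (G T T' hcard ε).det := by
  have hcont : Continuous fun ε : ℝ => (G T T' hcard ε).det := by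
    apply Continuous.matrix_det
    unfold G Cst
    apply Continuous.add ?_ continuous_const
    apply Continuous.matrix_mul ?_ continuous_const
    apply Continuous.matrix_mul continuous_const
    exact continuous_const.add (continuous_const.add
      (Continuous.smul Complex.continuous_ofReal continuous_const))
  have h0 : (G T T' hcard 0).det ≠ 0 := by
    rw [G_zero]
    exact (P0_det T T' hcard).ne_zero
  have hev : ∀ᶠ ε in nhds (0:ℝ), (G T T' hcard ε).det ≠ 0 :=
    (hcont.continuousAt).eventually_ne h0
  rw [Metric.eventually_nhds_iff] at hev
  obtain ⟨δ, hδ, hball⟩ := hev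
  refine ⟨δ/2, by linarith, ?_⟩
  rw [isUnit_iff_ne_zero]
  apply hball
  simp [abs_of_pos, hδ]


variable (d : Fin n → ℂ)

/-- sum of d outside T -/
def s0v (T : Finset (Fin n)) (d : Fin n → ℂ) : ℂ := ∑ j ∈ Tᶜ, d j

/-- the balanced product matrix -/
def pstar (T : Finset (Fin n)) (d : Fin n → ℂ) : Fin n → Fin n → ℂ := fun i j =>
  (1 - d i)/(Tᶜ.card : ℂ) + d j/(T.card : ℂ)
    - s0v T d/((T.card : ℂ) * (Tᶜ.card : ℂ))

open Classical in
/-- the bridge D-parameter -/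
def Dst (hcard : T.card = T'.card) (ε : ℝ) : Matrix (Fin n) (Fin n) ℂ :=
  Matrix.of fun i j => if i ∈ T ∧ j ∉ T then pstar T d i j / Cst T T' hcard ε j i else 0

lemma Cst_apply (ε : ℝ) (i j : Fin n) :
    Cst T T' hcard ε i j = C0m T T' hcard i j + (ε:ℂ) * UU T i j := by
  simp [Cst]

lemma C0m_cases (i j : Fin n) : C0m T T' hcard i j = 0 ∨ C0m T T' hcard i j = 1 := by
  rw [C0m, Matrix.of_apply]
  by_cases h : i ∈ T' \ T
  · rw [dif_pos h]
    by_cases h' : j = (tau T T' hcard ⟨i, h⟩ : Fin n)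
    · right; rw [if_pos h']
    · left; rw [if_neg h']
  · left; rw [dif_neg h]

lemma C0m_supp {i j : Fin n} (h : i ∈ T ∨ j ∉ T) : C0m T T' hcard i j = 0 := by
  rw [C0m, Matrix.of_apply]
  by_cases hd : i ∈ T' \ T
  · rw [dif_pos hd]
    rcases h with h | h
    · exact absurd (Finset.mem_sdiff.mp hd).2 (by simpa using h)
    · rw [if_neg]
      intro hc
      have : (tau T T' hcard ⟨i, hd⟩ : Fin n) ∈ T \ T' := (tau T T' hcard ⟨i, hd⟩).2
      exact h (hc ▸ (Finset.mem_sdiff.mp this).1)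
  · rw [dif_neg hd]

lemma supp_bridge (ε : ℝ) : Supp T (Cst T T' hcard ε) (Dst T T' d hcard ε) := by
  constructor
  · intro i j hij
    rw [Cst_apply, C0m_supp T T' hcard hij]
    have : UU T i j = 0 := by
      rw [UU, Matrix.of_apply, if_neg]
      intro hc
      rcases hij with h | h
      · exact hc.1 h
      · exact h hc.2
    rw [this, mul_zero, add_zero]
  · intro i j hij
    rw [Dst, Matrix.of_apply, if_neg]
    intro hc
    rcases hij with h | h
    · exact h hc.1
    · exact hc.2 h

lemma Cst_ne {ε : ℝ} (hε : 0 < ε) {i j : Fin n} (hi : i ∉ T) (hj : j ∈ T) :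
    Cst T T' hcard ε i j ≠ 0 := by
  rw [Cst_apply]
  have hU : UU T i j = 1 := by rw [UU, Matrix.of_apply, if_pos ⟨hi, hj⟩]
  rw [hU, mul_one]
  rcases C0m_cases T T' hcard i j with h | h
  · rw [h, zero_add]
    simpa using hε.ne'
  · rw [h]
    have : ((1 + ε : ℝ) : ℂ) ≠ 0 := by
      rw [Complex.ofReal_ne_zero]
      linarith
    convert this using 1
    push_cast
    ring

lemma cond_bridge {ε : ℝ} (hε : 0 < ε)
    (hk : (T.card : ℂ) ≠ 0) (hm : ((Tᶜ : Finset (Fin n)).card : ℂ) ≠ 0)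
    (hsum : ∑ i, d i = (T.card : ℂ)) :
    Cond T d (Cst T T' hcard ε) (Dst T T' d hcard ε) := by
  intro i
  by_cases hi : i ∈ T
  · rw [if_pos hi]
    have hterm : ∀ j, Cst T T' hcard ε i j * Dst T T' d hcard ε j i
        - Dst T T' d hcard ε i j * Cst T T' hcard ε j i
        = -(if j ∈ Tᶜ then pstar T d i j else 0) := by
      intro j
      have hC0 : Cst T T' hcard ε i j = 0 := (supp_bridge T T' hcard d ε).hC i j (Or.inl hi)
      rw [hC0, zero_mul]
      by_cases hj : j ∈ T
      · have h2 : Dst T T' d hcard ε i j = 0 := by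
          rw [Dst, Matrix.of_apply, if_neg (fun hc => hc.2 hj)]
        rw [h2, zero_mul]
        simp [Finset.mem_compl, hj]
      · have hD : Dst T T' d hcard ε i j = pstar T d i j / Cst T T' hcard ε j i := by
          rw [Dst, Matrix.of_apply, if_pos ⟨hi, hj⟩]
        rw [hD, div_mul_cancel₀ _ (Cst_ne T T' hcard hε hj hi)]
        simp [Finset.mem_compl, hj]
    rw [Finset.sum_congr rfl (fun j _ => hterm j), Finset.sum_neg_distrib,
      Finset.sum_ite_mem, Finset.univ_inter]
    have hsplit : ∑ j ∈ Tᶜ, pstar T d i j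
        = (Tᶜ.card : ℂ) * ((1 - d i)/(Tᶜ.card : ℂ))
          + (s0v T d)/(T.card : ℂ)
          - (Tᶜ.card : ℂ) * (s0v T d/((T.card : ℂ) * (Tᶜ.card : ℂ))) := by
      simp only [pstar]
      rw [Finset.sum_sub_distrib, Finset.sum_add_distrib, Finset.sum_const, Finset.sum_const]
      rw [← Finset.sum_div]
      rw [nsmul_eq_mul, nsmul_eq_mul]
      rfl
    rw [hsplit]
    field_simp
    ring
  · rw [if_neg hi]
    have hterm : ∀ j, Cst T T' hcard ε i j * Dst T T' d hcard ε j i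
        - Dst T T' d hcard ε i j * Cst T T' hcard ε j i
        = (if j ∈ T then pstar T d j i else 0) := by
      intro j
      have hD0 : Dst T T' d hcard ε i j = 0 := by
        rw [Dst, Matrix.of_apply, if_neg (fun hc => hi hc.1)]
      rw [hD0, zero_mul, sub_zero]
      by_cases hj : j ∈ T
      · have hD : Dst T T' d hcard ε j i = pstar T d j i / Cst T T' hcard ε i j := by
          rw [Dst, Matrix.of_apply, if_pos ⟨hj, hi⟩]
        rw [hD, mul_div_cancel₀ _ (Cst_ne T T' hcard hε hi hj), if_pos hj]
      · have : Cst T T' hcard ε i j = 0 :=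
          (supp_bridge T T' hcard d ε).hC i j (Or.inr hj)
        rw [this, zero_mul, if_neg hj]
    rw [Finset.sum_congr rfl (fun j _ => hterm j), Finset.sum_ite_mem, Finset.univ_inter]
    have hsT : ∑ j ∈ T, d j = (T.card : ℂ) - s0v T d := by
      have := Finset.sum_add_sum_compl T d
      rw [hsum] at this
      rw [s0v]
      linear_combination this
    have hsplit : ∑ j ∈ T, pstar T d j i
        = ((T.card : ℂ) - ((T.card : ℂ) - s0v T d))/(Tᶜ.card : ℂ)
          + (T.card : ℂ) * (d i/(T.card : ℂ))
          - (T.card : ℂ)  * (s0v T d/((T.card : ℂ) * (Tᶜ.card : ℂ))) := by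
      simp only [pstar]
      rw [Finset.sum_sub_distrib, Finset.sum_add_distrib, Finset.sum_const, Finset.sum_const]
      rw [nsmul_eq_mul, nsmul_eq_mul]
      have : ∑ j ∈ T, (1 - d j)/(Tᶜ.card : ℂ) = ((T.card : ℂ) - ∑ j ∈ T, d j)/(Tᶜ.card : ℂ) := by
        rw [← Finset.sum_div, Finset.sum_sub_distrib, Finset.sum_const, nsmul_eq_mul, mul_one]
      rw [this, hsT]
    rw [hsplit]
    field_simp
    ring


lemma P0_pm' : pm T' * (P0 T T' hcard * (1 - pm T)) = 0 := by
  ext i j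
  rw [pm_mul_apply]
  by_cases hi : i ∈ T'
  · rw [if_pos hi, mul_one_sub_pm_apply]
    by_cases hj : j ∈ T
    · rw [if_pos hj]; rfl
    · rw [if_neg hj, P0_apply]
      rw [if_neg, Matrix.zero_apply]
      by_cases hiT : i ∈ T
      · rw [sigf_id T T' hcard (fun hc => (Finset.mem_sdiff.mp hc).2 hiT)
          (fun hc => (Finset.mem_sdiff.mp hc).2 hi)]
        intro hc
        exact hj (hc ▸ hiT)
      · have hd : i ∈ T' \ T := Finset.mem_sdiff.mpr ⟨hi, hiT⟩
        rw [sigf_pos1 T T' hcard hd]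
        intro hc
        exact hj (hc ▸ (Finset.mem_sdiff.mp (tau T T' hcard ⟨i, hd⟩).2).1)
  · rw [if_neg hi, Matrix.zero_apply]

lemma mulVec_eq_zero {A : Matrix (Fin n) (Fin n) ℂ} (h : IsUnit A.det) :
    ∀ {v : Fin n → ℂ}, A.mulVec v = 0 → v = 0 := by
  intro v hv
  calc v = (1 : Matrix (Fin n) (Fin n) ℂ).mulVec v := by rw [Matrix.one_mulVec]
  _ = (A⁻¹ * A).mulVec v := by rw [Matrix.nonsing_inv_mul _ h]
  _ = A⁻¹.mulVec (A.mulVec v) := by rw [Matrix.mulVec_mulVec]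
  _ = 0 := by rw [hv, Matrix.mulVec_zero]

lemma P0_inj {v : Fin n → ℂ} (hv : (P0 T T' hcard).mulVec v = 0) : v = 0 :=
  mulVec_eq_zero (P0_det T T' hcard) hv

lemma bridge_trans {ε : ℝ} (hdet : IsUnit (G T T' hcard ε).det) :
    (∀ x, (Phi T (Cst T T' hcard ε) (Dst T T' d hcard ε)).mulVec x = x →
      (pm T').mulVec x = 0 → x = 0) ∧
    (∀ y, (pm T').mulVec y = y → ∃ x,
      (Phi T (Cst T T' hcard ε) (Dst T T' d hcard ε)).mulVec x = x ∧
      (pm T').mulVec x = y) := by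
  have hs := supp_bridge T T' hcard d ε
  set CC := Cst T T' hcard ε with hCC
  set DD := Dst T T' d hcard ε with hDD
  set V0 := pm T + CC with hV0
  set W0 := pm T - DD * CC + DD with hW0
  have hphi : Phi T CC DD = V0 * W0 := rfl
  have hWV : W0 * V0 = pm T := WV hs
  have hpmW : pm T * W0 = W0 := pmW hs
  have hqV : Phi T CC DD * V0 = V0 * pm T := phi_mul_V hs
  have hG : G T T' hcard ε = pm T' * V0 * pm T + P0 T T' hcard * (1 - pm T) := rfl
  have hGl : (G T T' hcard ε)⁻¹ * G T T' hcard ε = 1 := Matrix.nonsing_inv_mul _ hdet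
  have hGr : G T T' hcard ε * (G T T' hcard ε)⁻¹ = 1 := Matrix.mul_nonsing_inv _ hdet
  clear_value CC DD V0 W0
  constructor
  · intro x hx hpx
    set y := W0.mulVec x with hy
    have hxy : x = V0.mulVec y := by
      rw [hy, Matrix.mulVec_mulVec, ← hphi, hx]
    have hyp : (pm T).mulVec y = y := by
      rw [hy, Matrix.mulVec_mulVec, hpmW]
    have hGy : (G T T' hcard ε).mulVec y = 0 := by
      rw [hG, Matrix.add_mulVec]
      have e1 : (pm T' * V0 * pm T).mulVec y = (pm T').mulVec x := by
        rw [← Matrix.mulVec_mulVec, hyp, ← Matrix.mulVec_mulVec, ← hxy]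
      have e2 : (P0 T T' hcard * (1 - pm T)).mulVec y = 0 := by
        rw [← Matrix.mulVec_mulVec]
        have : (1 - pm T).mulVec y = 0 := by
          rw [Matrix.sub_mulVec, Matrix.one_mulVec, hyp, sub_self]
        rw [this, Matrix.mulVec_zero]
      rw [e1, e2, hpx, add_zero]
    have hy0 : y = 0 := mulVec_eq_zero hdet hGy
    rw [hxy, hy0, Matrix.mulVec_zero]
  · intro y hy
    set z := (G T T' hcard ε)⁻¹.mulVec y with hz
    have hGz : (G T T' hcard ε).mulVec z = y := by
      rw [hz, Matrix.mulVec_mulVec, hGr, Matrix.one_mulVec]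
    have hid : (1 - pm T') * G T T' hcard ε = P0 T T' hcard * (1 - pm T) := by
      rw [Matrix.sub_mul, Matrix.one_mul, hG, Matrix.mul_add]
      have e1 : pm T' * (pm T' * V0 * pm T) = pm T' * V0 * pm T := by
        rw [← Matrix.mul_assoc, ← Matrix.mul_assoc, pm_idem]
      rw [e1, P0_pm' T T' hcard, add_zero]
      abel
    have hP0z : (P0 T T' hcard).mulVec ((1 - pm T).mulVec z) = 0 := by
      rw [Matrix.mulVec_mulVec, ← hid, ← Matrix.mulVec_mulVec, hGz,
        Matrix.sub_mulVec, Matrix.one_mulVec, hy, sub_self]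
    have hpz : (1 - pm T).mulVec z = 0 := P0_inj T T' hcard hP0z
    have hpmz : (pm T).mulVec z = z := by
      have := hpz
      rw [Matrix.sub_mulVec, Matrix.one_mulVec, sub_eq_zero] at this
      exact this.symm
    refine ⟨V0.mulVec ((pm T).mulVec z), ?_, ?_⟩
    · have hpp : (pm T).mulVec ((pm T).mulVec z) = (pm T).mulVec z := by
        rw [Matrix.mulVec_mulVec, pm_idem]
      rw [Matrix.mulVec_mulVec, hqV, ← Matrix.mulVec_mulVec, hpp]
    · have : (pm T').mulVec (V0.mulVec ((pm T).mulVec z)) = (pm T' * V0 * pm T).mulVec z := by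
        rw [Matrix.mulVec_mulVec, Matrix.mulVec_mulVec, Matrix.mul_assoc]
      rw [this, ← hGz, hG, Matrix.add_mulVec]
      have e2 : (P0 T T' hcard * (1 - pm T)).mulVec z = 0 := by
        rw [← Matrix.mulVec_mulVec, hpz, Matrix.mulVec_zero]
      rw [e2, add_zero]

end Bridge


lemma phi_empty {C D : Matrix (Fin n) (Fin n) ℂ} (h : Supp (∅ : Finset (Fin n)) C D) :
    Phi ∅ C D = 0 := by
  have hC : C = 0 := by
    ext i j
    exact h.hC i j (Or.inr (Finset.notMem_empty j))
  have hD : D = 0 := by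
    ext i j
    exact h.hD i j (Or.inl (Finset.notMem_empty i))
  have hpm : pm (∅ : Finset (Fin n)) = 0 := by
    ext i j
    rw [pm, Matrix.diagonal_apply]
    by_cases hij : i = j <;> simp [hij]
  rw [Phi, hC, hD, hpm]
  simp

lemma phi_univ {C D : Matrix (Fin n) (Fin n) ℂ} (h : Supp (Finset.univ : Finset (Fin n)) C D) :
    Phi Finset.univ C D = 1 := by
  have hC : C = 0 := by
    ext i j
    exact h.hC i j (Or.inl (Finset.mem_univ i))
  have hD : D = 0 := by
    ext i j
    exact h.hD i j (Or.inr (Finset.mem_univ j))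
  have hpm : pm (Finset.univ : Finset (Fin n)) = 1 := by
    ext i j
    rw [pm, Matrix.diagonal_apply]
    by_cases hij : i = j <;> simp [hij, Matrix.one_apply]
  rw [Phi, hC, hD, hpm]
  simp

lemma trace_eq_sum {d : Fin n → ℂ} {q : Matrix (Fin n) (Fin n) ℂ} (hq : q ∈ SS d) :
    q.trace = ∑ i, d i := by
  rw [Matrix.trace]
  exact Finset.sum_congr rfl (fun i _ => hq.2 i)

/-- the main connectivity result -/
lemma main (d : Fin n → ℂ) (q : Matrix (Fin n) (Fin n) ℂ) (hq : q ∈ SS d)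
    (r : Matrix (Fin n) (Fin n) ℂ) (hr : r ∈ SS d) : JoinedIn (SS d) q r := by
  obtain ⟨Tq, h1q, h2q⟩ := ext_exists q hq.1
  obtain ⟨Cq, Dq, hsq, hfq⟩ := fact q Tq hq.1 h1q h2q
  obtain ⟨Tr, h1r, h2r⟩ := ext_exists r hr.1
  obtain ⟨Cr, Dr, hsr, hfr⟩ := fact r Tr hr.1 h1r h2r
  have hcondq : Cond Tq d Cq Dq := cond_of_mem hsq (hfq ▸ hq)
  have hcondr : Cond Tr d Cr Dr := cond_of_mem hsr (hfr ▸ hr)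
  have htrq : (Tq.card : ℂ) = ∑ i, d i := by
    rw [← trace_eq_sum hq, hfq, phi_trace hsq]
  have htrr : (Tr.card : ℂ) = ∑ i, d i := by
    rw [← trace_eq_sum hr, hfr, phi_trace hsr]
  have hcards : Tq.card = Tr.card := by
    have : (Tq.card : ℂ) = (Tr.card : ℂ) := by rw [htrq, htrr]
    exact_mod_cast this
  by_cases h0 : Tq.card = 0
  · have hTq : Tq = ∅ := Finset.card_eq_zero.mp h0
    have hTr : Tr = ∅ := Finset.card_eq_zero.mp (hcards ▸ h0)
    have hqr : q = r := by
      rw [hfq, hfr]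
      subst hTq hTr
      rw [phi_empty hsq, phi_empty hsr]
    rw [hqr]
    exact JoinedIn.refl hr
  by_cases hn : Tq.card = n
  · have hTq : Tq = Finset.univ := by
      apply Finset.eq_univ_of_card
      rw [hn, Fintype.card_fin]
    have hTr : Tr = Finset.univ := by
      apply Finset.eq_univ_of_card
      rw [← hcards, hn, Fintype.card_fin]
    have hqr : q = r := by
      rw [hfq, hfr]
      subst hTq hTr
      rw [phi_univ hsq, phi_univ hsr]
    rw [hqr]
    exact JoinedIn.refl hr
  -- main case : 0 < card < n
  have hk : (Tq.card : ℂ) ≠ 0 := Nat.cast_ne_zero.mpr h0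
  have hcardlt : Tq.card < n := by
    have hle : Tq.card ≤ n := by
      have := Finset.card_le_univ Tq
      simpa using this
    exact lt_of_le_of_ne hle hn
  have hm : ((Tqᶜ : Finset (Fin n)).card : ℂ) ≠ 0 := by
    rw [Finset.card_compl, Fintype.card_fin]
    apply Nat.cast_ne_zero.mpr
    omega
  obtain ⟨ε, hε, hdet⟩ := exists_eps Tq Tr hcards
  have hsupb := supp_bridge Tq Tr hcards d ε
  have hcondb : Cond Tq d (Cst Tq Tr hcards ε) (Dst Tq Tr d hcards ε) :=
    cond_bridge Tq Tr hcards d hε hk hm htrq.symm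
  set qs := Phi Tq (Cst Tq Tr hcards ε) (Dst Tq Tr d hcards ε) with hqs
  have hqs_mem : qs ∈ SS d := phi_mem hsupb hcondb
  have j1 : JoinedIn (SS d) q qs := by
    rw [hfq, hqs]
    exact cell_joined hsq hsupb hcondq hcondb
  obtain ⟨hb1, hb2⟩ := bridge_trans Tq Tr hcards d hdet
  obtain ⟨C2, D2, hs2, hf2⟩ := fact qs Tr hqs_mem.1 hb1 hb2
  have hcond2 : Cond Tr d C2 D2 := cond_of_mem hs2 (hf2 ▸ hqs_mem)
  have j2 : JoinedIn (SS d) qs r := by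
    rw [hf2, hfr]
    exact cell_joined hs2 hsr hcond2 hcondr
  exact j1.trans j2

end IdemDiag

/-- For every prescribed diagonal `d`, the set of idempotents `q` in `M_n(ℂ)`
with diagonal `d` is path-connected (possibly empty): any two of its points
are joined by a path inside it. -/
theorem idempotents_fixed_diagonal_pathConnected (n : ℕ) (d : Fin n → ℂ) :
    ∀ q ∈ {q : Matrix (Fin n) (Fin n) ℂ | q * q = q ∧ ∀ i, q i i = d i},
      ∀ r ∈ {q : Matrix (Fin n) (Fin n) ℂ | q * q = q ∧ ∀ i, q i i = d i},
        JoinedIn {q : Matrix (Fin n) (Fin n) ℂ | q * q = q ∧ ∀ i, q i i = d i} q r := by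
  intro q hq r hr
  exact IdemDiag.main d q hq r hr
end
end

section
/- Let p be an orthogonal projection in M_n with minimal block decomposition p = Σ_{j=1}^s p f_j. Then the image E(p M_n p^⊥) equals the set of diagonal matrices d with Tr(d f_j) = 0 for all j = 1, …, s; equivalently, E(p M_n p^⊥) is the orthogonal complement of {p}′ ∩ D_n inside D_n with respect to the Hilbert–Schmidt inner product. -/
/-- The diagonal conditional expectation `E : M_n → D_n`, erasing off-diagonal entries. -/
def diagExp {n : ℕ} (x : Matrix (Fin n) (Fin n) ℂ) : Matrix (Fin n) (Fin n) ℂ :=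
  Matrix.of fun i j => if i = j then x i j else 0

namespace CornerDiagAux

open Matrix
open scoped InnerProductSpace ComplexConjugate

variable (n : ℕ)

lemma eqzero_of_trace {n : ℕ} (m : Matrix (Fin n) (Fin n) ℂ) (h : (mᴴ * m).trace = 0) :
    m = 0 := by
  have h1 : ∑ i, ∑ j, Complex.normSq (m j i) = 0 := by
    have h2 := congrArg Complex.re h
    rw [Complex.zero_re] at h2
    rw [← h2]
    simp only [Matrix.trace, Matrix.diag, Matrix.mul_apply, Matrix.conjTranspose_apply]
    rw [Complex.re_sum]
    refine Finset.sum_congr rfl fun i _ => ?_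
    rw [Complex.re_sum]
    refine Finset.sum_congr rfl fun j _ => ?_
    simp [Complex.normSq_apply, Complex.mul_re, mul_comm]
  ext i j
  have hj := (Finset.sum_eq_zero_iff_of_nonneg
    (fun k _ => Finset.sum_nonneg fun l _ => Complex.normSq_nonneg _)).1 h1 j (Finset.mem_univ j)
  have hi := (Finset.sum_eq_zero_iff_of_nonneg
    (fun l _ => Complex.normSq_nonneg _)).1 hj i (Finset.mem_univ i)
  simpa [Complex.normSq_eq_zero] using hi

lemma key {n : ℕ} (p : Matrix (Fin n) (Fin n) ℂ) (hp : p * p = p) (hps : pᴴ = p)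
    (u : Fin n → ℂ) (h : p * Matrix.diagonal u * (1 - p) = 0) :
    Matrix.diagonal u * p = p * Matrix.diagonal u := by
  set U := Matrix.diagonal u with hU
  have hpup : p * U * p = p * U := by
    have h2 : p * U - p * U * p = 0 := by rw [← h]; noncomm_ring
    have := sub_eq_zero.mp h2
    rw [← this]
  set m : Matrix (Fin n) (Fin n) ℂ := (1 - p) * (U * p) with hmdef
  have hm : m = U * p - p * U := by
    rw [hmdef]
    have : (1 - p) * (U * p) = U * p - p * U * p := by noncomm_ring
    rw [this, hpup]
  have hmH : mᴴ = p * Uᴴ * (1 - p) := by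
    rw [hmdef]
    simp [Matrix.conjTranspose_mul, Matrix.conjTranspose_sub, Matrix.conjTranspose_one, hps,
      Matrix.mul_assoc]
  have hcomm : Uᴴ * U = U * Uᴴ := by
    ext i j
    simp only [hU, Matrix.diagonal_conjTranspose, Matrix.diagonal_mul_diagonal, Pi.star_apply,
      Matrix.diagonal_apply, Pi.mul_apply]
    split_ifs with hij
    · subst hij; ring
    · rfl
  have e1 : mᴴ * m = p * (Uᴴ * m) := by
    rw [hmH, hmdef]
    have hq : ((1:Matrix (Fin n) (Fin n) ℂ) - p) * ((1 - p) * (U * p)) = (1 - p) * (U * p) := by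
      rw [← Matrix.mul_assoc]
      have : ((1:Matrix (Fin n) (Fin n) ℂ) - p) * (1 - p) = 1 - p - p + p * p := by noncomm_ring
      rw [this, hp]
      congr 1
      noncomm_ring
    rw [Matrix.mul_assoc, hq, Matrix.mul_assoc]
  have t2 : (Uᴴ * (p * U)).trace = (Uᴴ * U * p).trace := by
    calc (Uᴴ * (p * U)).trace = ((p * U) * Uᴴ).trace := (Matrix.trace_mul_comm _ _).symm
      _ = (p * (U * Uᴴ)).trace := by rw [Matrix.mul_assoc]
      _ = (p * (Uᴴ * U)).trace := by rw [hcomm]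
      _ = ((Uᴴ * U) * p).trace := Matrix.trace_mul_comm _ _
  have hmp : m * p = m := by
    rw [hm]
    have h3 : (U * p - p * U) * p = U * (p * p) - p * (U * p) := by noncomm_ring
    have h4 : p * (U * p) = p * U * p := by noncomm_ring
    rw [h3, hp, h4, hpup]
  have e2 : (mᴴ * m).trace = 0 := by
    calc (mᴴ * m).trace = (p * (Uᴴ * m)).trace := by rw [e1]
      _ = ((Uᴴ * m) * p).trace := Matrix.trace_mul_comm _ _
      _ = (Uᴴ * (m * p)).trace := by rw [Matrix.mul_assoc]
      _ = (Uᴴ * (U * p) - Uᴴ * (p * U)).trace := by rw [hmp, hm, Matrix.mul_sub]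
      _ = (Uᴴ * U * p).trace - (Uᴴ * (p * U)).trace := by
            rw [Matrix.trace_sub, Matrix.mul_assoc]
      _ = 0 := by rw [t2, sub_self]
  have := eqzero_of_trace m e2
  rw [hm] at this
  exact sub_eq_zero.mp this

lemma diagE_add (u v : EuclideanSpace ℂ (Fin n)) :
    Matrix.diagonal (u + v) = Matrix.diagonal u + Matrix.diagonal v := by
  ext i j
  simp only [Matrix.diagonal_apply, Matrix.add_apply]
  split_ifs <;> simp [PiLp.add_apply]

lemma diagE_smul (c : ℂ) (u : EuclideanSpace ℂ (Fin n)) :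
    Matrix.diagonal (c • u) = c • Matrix.diagonal u := by
  ext i j
  simp only [Matrix.diagonal_apply, Matrix.smul_apply]
  split_ifs <;> simp [PiLp.smul_apply]

noncomputable def Tmap (p : Matrix (Fin n) (Fin n) ℂ) :
    Matrix (Fin n) (Fin n) ℂ →ₗ[ℂ] EuclideanSpace ℂ (Fin n) where
  toFun x := WithLp.toLp 2 (fun i => (p * x * (1 - p)) i i)
  map_add' x y := by
    ext i
    simp [Matrix.mul_add, Matrix.add_mul]
  map_smul' c x := by
    ext i
    simp [Matrix.mul_smul, Matrix.smul_mul]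

noncomputable def Cmap (p : Matrix (Fin n) (Fin n) ℂ) :
    EuclideanSpace ℂ (Fin n) →ₗ[ℂ] Matrix (Fin n) (Fin n) ℂ where
  toFun u := Matrix.diagonal u * p - p * Matrix.diagonal u
  map_add' u v := by
    dsimp only
    rw [diagE_add]
    simp only [Matrix.add_mul, Matrix.mul_add]
    abel
  map_smul' c u := by
    dsimp only [RingHom.id_apply]
    rw [diagE_smul, Matrix.smul_mul, Matrix.mul_smul, smul_sub]

lemma trace_inner (c d : Matrix (Fin n) (Fin n) ℂ) (hc : c.IsDiag) :
    (cᴴ * d).trace =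
      ⟪(show EuclideanSpace ℂ (Fin n) from WithLp.toLp 2 fun i => c i i),
        (show EuclideanSpace ℂ (Fin n) from WithLp.toLp 2 fun i => d i i)⟫_ℂ := by
  simp only [PiLp.inner_apply, RCLike.inner_apply, Matrix.trace, Matrix.diag, Matrix.mul_apply,
    Matrix.conjTranspose_apply]
  refine Finset.sum_congr rfl fun i _ => ?_
  refine (Finset.sum_eq_single i (fun k _ hki => by rw [hc hki]; simp)
    (fun h => absurd (Finset.mem_univ i) h)).trans ?_
  exact mul_comm _ _

lemma range_eq (p : Matrix (Fin n) (Fin n) ℂ) (hp : p * p = p) (hps : pᴴ = p) :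
    LinearMap.range (Tmap n p) = (LinearMap.ker (Cmap n p))ᗮ := by
  have hq0 : ((1 : Matrix (Fin n) (Fin n) ℂ) - p) * p = 0 := by
    rw [Matrix.sub_mul, Matrix.one_mul, hp, sub_self]
  apply le_antisymm
  · rintro v ⟨x, rfl⟩
    rw [Submodule.mem_orthogonal]
    intro u hu
    have huc : Matrix.diagonal u * p = p * Matrix.diagonal u := by
      rw [LinearMap.mem_ker] at hu
      have hu' : Matrix.diagonal u * p - p * Matrix.diagonal u = 0 := hu
      exact sub_eq_zero.mp hu'
    have hform : ⟪u, Tmap n p x⟫_ℂ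
        = (Matrix.diagonal (star u) * (p * x * (1 - p))).trace := by
      simp [Tmap, PiLp.inner_apply, RCLike.inner_apply, Matrix.trace, Matrix.diag,
        Matrix.diagonal_mul]
      exact Finset.sum_congr rfl fun _ _ => mul_comm _ _
    rw [hform]
    have hDp : p * Matrix.diagonal (star u) = Matrix.diagonal (star u) * p := by
      have h2 := congrArg Matrix.conjTranspose huc
      simpa [Matrix.conjTranspose_mul, hps, Matrix.diagonal_conjTranspose] using h2
    set D := Matrix.diagonal (star u) with hD
    have e : D * (p * x * (1 - p)) = p * (D * x * (1 - p)) := by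
      rw [show D * (p * x * (1 - p)) = (D * p) * (x * (1 - p)) from by noncomm_ring, ← hDp,
        show (p * D) * (x * (1 - p)) = p * (D * x * (1 - p)) from by noncomm_ring]
    rw [e, Matrix.trace_mul_comm,
      show (D * x * (1 - p)) * p = D * x * ((1 - p) * p) from by noncomm_ring, hq0,
      Matrix.mul_zero, Matrix.trace_zero]
  · have hsub : (LinearMap.range (Tmap n p))ᗮ ≤ LinearMap.ker (Cmap n p) := by
      intro u hu
      rw [Submodule.mem_orthogonal] at hu
      have hx : ∀ x, ⟪Tmap n p x, u⟫_ℂ = 0 := fun x => hu _ ⟨x, rfl⟩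
      have hx2 : ∀ x : Matrix (Fin n) (Fin n) ℂ,
          (xᴴ * (p * Matrix.diagonal u * (1 - p))).trace = 0 := by
        intro x
        have h1 := hx x
        have hform : ⟪Tmap n p x, u⟫_ℂ = ((p * x * (1 - p))ᴴ * Matrix.diagonal u).trace := by
          simp only [Tmap, LinearMap.coe_mk, AddHom.coe_mk, PiLp.inner_apply, RCLike.inner_apply,
            Matrix.trace, Matrix.diag, Matrix.mul_diagonal, Matrix.conjTranspose_apply]
          exact Finset.sum_congr rfl fun _ _ => mul_comm _ _
        rw [hform] at h1
        have hH : (p * x * (1 - p))ᴴ = (1 - p) * xᴴ * p := by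
          simp [Matrix.conjTranspose_mul, Matrix.conjTranspose_sub, Matrix.conjTranspose_one,
            hps, Matrix.mul_assoc]
        rw [hH] at h1
        calc (xᴴ * (p * Matrix.diagonal u * (1 - p))).trace
            = ((xᴴ * (p * Matrix.diagonal u)) * (1 - p)).trace := by
              rw [show (xᴴ * (p * Matrix.diagonal u)) * (1 - p)
                  = xᴴ * (p * Matrix.diagonal u * (1 - p)) from by noncomm_ring]
          _ = ((1 - p) * (xᴴ * (p * Matrix.diagonal u))).trace := Matrix.trace_mul_comm _ _
          _ = ((1 - p) * xᴴ * p * Matrix.diagonal u).trace := by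
              rw [show ((1:Matrix (Fin n) (Fin n) ℂ) - p) * xᴴ * p * Matrix.diagonal u
                  = (1 - p) * (xᴴ * (p * Matrix.diagonal u)) from by noncomm_ring]
          _ = 0 := h1
      have hM : p * Matrix.diagonal u * (1 - p) = 0 := by
        apply eqzero_of_trace
        exact hx2 (p * Matrix.diagonal u * (1 - p))
      rw [LinearMap.mem_ker]
      show Matrix.diagonal u * p - p * Matrix.diagonal u = 0
      rw [key p hp hps u hM, sub_self]
    calc (LinearMap.ker (Cmap n p))ᗮ ≤ ((LinearMap.range (Tmap n p))ᗮ)ᗮ :=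
          Submodule.orthogonal_le hsub
      _ = LinearMap.range (Tmap n p) := Submodule.orthogonal_orthogonal _

end CornerDiagAux

open CornerDiagAux Matrix
open scoped InnerProductSpace

/-- For a projection `p`, the image `E(p M_n p^⊥)` is exactly the orthogonal complement
of `{p}′ ∩ D_n` inside `D_n` with respect to the Hilbert–Schmidt inner product, i.e. the
set of diagonal matrices `d` with `Tr(c* d) = 0` for every diagonal `c` commuting with `p`. -/
theorem image_of_corner_under_diagonal_expectation (n : ℕ)
    (p : Matrix (Fin n) (Fin n) ℂ) (hp : p * p = p) (hps : p.conjTranspose = p) :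
    {d : Matrix (Fin n) (Fin n) ℂ | ∃ x, d = diagExp (p * x * (1 - p))} =
      {d : Matrix (Fin n) (Fin n) ℂ | d.IsDiag ∧
        ∀ c : Matrix (Fin n) (Fin n) ℂ, c.IsDiag → c * p = p * c →
          (c.conjTranspose * d).trace = 0} := by
  ext d
  simp only [Set.mem_setOf_eq]
  constructor
  · rintro ⟨x, rfl⟩
    constructor
    · intro i j hij
      simp [diagExp, hij]
    · intro c hc hcp
      have hcd : Matrix.diagonal c.diag = c := hc.diagonal_diag
      have hker : (show EuclideanSpace ℂ (Fin n) from WithLp.toLp 2 fun i => c i i)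
          ∈ LinearMap.ker (Cmap n p) := by
        rw [LinearMap.mem_ker]
        show Matrix.diagonal (fun i => c i i) * p - p * Matrix.diagonal (fun i => c i i) = 0
        rw [show (Matrix.diagonal (fun i => c i i) : Matrix (Fin n) (Fin n) ℂ) = c from hcd,
          hcp, sub_self]
      have hmem : Tmap n p x ∈ (LinearMap.ker (Cmap n p))ᗮ := by
        have h : Tmap n p x ∈ LinearMap.range (Tmap n p) := ⟨x, rfl⟩
        rwa [range_eq n p hp hps] at h
      have h0 := (Submodule.mem_orthogonal _ _).mp hmem _ hker
      rw [trace_inner n c _ hc]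
      have hvec : (show EuclideanSpace ℂ (Fin n) from WithLp.toLp 2 fun i => diagExp (p * x * (1 - p)) i i)
          = Tmap n p x := by
        ext i
        simp [diagExp, Tmap]
      rw [hvec]
      exact h0
  · rintro ⟨hdiag, hortho⟩
    have hmem : (show EuclideanSpace ℂ (Fin n) from WithLp.toLp 2 fun i => d i i)
        ∈ (LinearMap.ker (Cmap n p))ᗮ := by
      rw [Submodule.mem_orthogonal]
      intro u hu
      rw [LinearMap.mem_ker] at hu
      have hu' : Matrix.diagonal u * p - p * Matrix.diagonal u = 0 := hu
      have hcomm : Matrix.diagonal u * p = p * Matrix.diagonal u := sub_eq_zero.mp hu'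
      have h0 := hortho (Matrix.diagonal u) (Matrix.isDiag_diagonal u) hcomm
      rw [trace_inner n _ _ (Matrix.isDiag_diagonal u)] at h0
      rw [show (show EuclideanSpace ℂ (Fin n) from WithLp.toLp 2 fun i => Matrix.diagonal u i i) = u from by
        ext i; simp] at h0
      exact h0
    rw [← range_eq n p hp hps] at hmem
    obtain ⟨x, hx⟩ := hmem
    refine ⟨x, ?_⟩
    ext i j
    by_cases hij : i = j
    · subst hij
      have h := congrArg (fun v => v i) hx
      simp only [diagExp, Matrix.of_apply, if_pos rfl]
      exact h.symm
    · rw [hdiag hij]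
      simp [diagExp, hij]
end

section
/- Let p be an orthogonal projection in M_n with minimal block decomposition p = Σ_{j=1}^s p f_j, and let d be diagonal. Then d is the diagonal of some idempotent with the same range as p if and only if Tr(d f_j) = rank(p f_j) for j = 1, …, s. -/
open Matrix LinearMap

/-- The rank of an idempotent complex matrix equals its trace. -/
lemma aux_rank_eq_trace {n : ℕ} (e : Matrix (Fin n) (Fin n) ℂ)
    (he : e * e = e) : ((e.rank : ℂ)) = e.trace := by
  have hcomp : e.mulVecLin ∘ₗ e.mulVecLin = e.mulVecLin := by
    rw [← Matrix.mulVecLin_mul, he]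
  have hproj : LinearMap.IsProj (LinearMap.range e.mulVecLin) e.mulVecLin := by
    refine ⟨fun x => LinearMap.mem_range_self _ x, ?_⟩
    rintro x ⟨y, rfl⟩
    exact LinearMap.congr_fun hcomp y
  have ht := hproj.trace
  rw [LinearMap.trace_eq_matrix_trace ℂ (Pi.basisFun ℂ (Fin n)),
    LinearMap.toMatrix_eq_toMatrix', ← Matrix.toLin'_apply', LinearMap.toMatrix'_toLin'] at ht
  rw [Matrix.rank]
  exact ht.symm

/-- If the trace of `Aᴴ * A` vanishes then `A = 0`. -/
lemma aux_trace_zero {n : ℕ} (A : Matrix (Fin n) (Fin n) ℂ)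
    (h : (Aᴴ * A).trace = 0) : A = 0 := by
  have h1 : ∑ j, ∑ i, (Complex.normSq (A i j) : ℂ) = 0 := by
    rw [← h, Matrix.trace]
    refine Finset.sum_congr rfl fun j _ => ?_
    simp [Matrix.mul_apply, Matrix.conjTranspose_apply, Complex.normSq_eq_conj_mul_self]
  have h2 : ∑ j, ∑ i, Complex.normSq (A i j) = 0 := by exact_mod_cast h1
  ext i j
  have hj := (Finset.sum_eq_zero_iff_of_nonneg
    (fun j _ => Finset.sum_nonneg fun i _ => Complex.normSq_nonneg _)).1 h2 j (Finset.mem_univ j)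
  have hi := (Finset.sum_eq_zero_iff_of_nonneg
    (fun i _ => Complex.normSq_nonneg _)).1 hj i (Finset.mem_univ i)
  simpa using Complex.normSq_eq_zero.1 hi

lemma aux_trace_mul_isDiag {n : ℕ} (M f : Matrix (Fin n) (Fin n) ℂ) (hf : f.IsDiag) :
    (M * f).trace = ∑ i, M i i * f i i := by
  rw [Matrix.trace]
  refine Finset.sum_congr rfl fun i _ => ?_
  rw [Matrix.diag_apply, Matrix.mul_apply]
  exact Finset.sum_eq_single i (fun k _ hk => by rw [hf hk, mul_zero]) (by simp)

set_option maxHeartbeats 1600000 in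
/-- A diagonal `d` is the diagonal of an idempotent with the same range as the
projection `p` if and only if `Tr(d f) = rank(p f)` for every diagonal projection `f`
commuting with `p` (equivalently, for each minimal block projection of `p`). -/
theorem diagonal_of_idempotent_with_prescribed_range (n : ℕ)
    (p d : Matrix (Fin n) (Fin n) ℂ) (hp : p * p = p) (hps : p.conjTranspose = p)
    (hd : d.IsDiag) :
    (∃ q : Matrix (Fin n) (Fin n) ℂ, q * q = q ∧ q * p = p ∧ p * q = q ∧
        ∀ i, q i i = d i i) ↔
      ∀ f : Matrix (Fin n) (Fin n) ℂ, f.IsDiag → f * f = f → f.conjTranspose = f →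
        f * p = p * f → (d * f).trace = ((p * f).rank : ℂ) := by
  constructor
  · rintro ⟨q, hq, hqp, hpq, hdiag⟩ f hfd hff hfs hfp
    have hpfidem : (p * f) * (p * f) = p * f := by
      calc (p * f) * (p * f) = p * (f * p) * f := by noncomm_ring
        _ = p * (p * f) * f := by rw [hfp]
        _ = (p * p) * (f * f) := by noncomm_ring
        _ = p * f := by rw [hp, hff]
    rw [aux_rank_eq_trace _ hpfidem]
    have h1 : (d * f).trace = (q * f).trace := by
      rw [aux_trace_mul_isDiag _ _ hfd, aux_trace_mul_isDiag _ _ hfd]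
      exact Finset.sum_congr rfl fun i _ => by rw [hdiag i]
    have h2 : (q * f).trace = (p * f).trace := by
      calc (q * f).trace = ((p * q) * f).trace := by rw [hpq]
        _ = (q * (f * p)).trace := by
            rw [mul_assoc, Matrix.trace_mul_comm, mul_assoc]
        _ = ((q * p) * f).trace := by rw [hfp, mul_assoc]
        _ = (p * f).trace := by rw [hqp]
    rw [h1, h2]
  · intro h
    -- key consequence of the hypothesis
    have key : ∀ γ : Fin n → ℂ, (∀ i j, p i j ≠ 0 → γ i = γ j) →
        ∑ i, γ i * (d i i - p i i) = 0 := by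
      intro γ hγ
      rw [← Finset.sum_fiberwise_of_maps_to (g := γ) (t := Finset.univ.image γ)
        (fun i _ => Finset.mem_image_of_mem γ (Finset.mem_univ i))
        (fun i => γ i * (d i i - p i i))]
      refine Finset.sum_eq_zero fun lam _ => ?_
      have hsub : ∑ i ∈ Finset.univ.filter (fun i => γ i = lam), (d i i - p i i) = 0 := by
        set f : Matrix (Fin n) (Fin n) ℂ :=
          Matrix.diagonal (fun i => if γ i = lam then (1:ℂ) else 0) with hf
        have hfd : f.IsDiag := Matrix.isDiag_diagonal _
        have hff : f * f = f := by
          have he : (fun i => (if γ i = lam then (1:ℂ) else 0) * (if γ i = lam then (1:ℂ) else 0))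
              = fun i => if γ i = lam then (1:ℂ) else 0 := by
            funext i; by_cases hi : γ i = lam <;> simp [hi]
          rw [hf, Matrix.diagonal_mul_diagonal, he]
        have hfs : f.conjTranspose = f := by
          have he : (star fun i => if γ i = lam then (1:ℂ) else 0)
              = fun i => if γ i = lam then (1:ℂ) else 0 := by
            funext i
            show star (if γ i = lam then (1:ℂ) else 0) = _
            by_cases hi : γ i = lam <;> simp [hi]
          rw [hf, Matrix.diagonal_conjTranspose, he]
        have hfp : f * p = p * f := by
          ext i j
          rw [hf, Matrix.diagonal_mul, Matrix.mul_diagonal]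
          by_cases hpij : p i j = 0
          · rw [hpij, mul_zero, zero_mul]
          · rw [hγ i j hpij, mul_comm]
        have hpfidem : (p * f) * (p * f) = p * f := by
          calc (p * f) * (p * f) = p * (f * p) * f := by noncomm_ring
            _ = p * (p * f) * f := by rw [hfp]
            _ = (p * p) * (f * f) := by noncomm_ring
            _ = p * f := by rw [hp, hff]
        have htr := h f hfd hff hfs hfp
        rw [aux_rank_eq_trace _ hpfidem] at htr
        have hdt : (d * f).trace = ∑ i, d i i * (if γ i = lam then (1:ℂ) else 0) := by
          rw [aux_trace_mul_isDiag _ _ hfd]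
          exact Finset.sum_congr rfl fun i _ => by rw [hf, Matrix.diagonal_apply_eq]
        have hpt : (p * f).trace = ∑ i, p i i * (if γ i = lam then (1:ℂ) else 0) := by
          rw [aux_trace_mul_isDiag _ _ hfd]
          exact Finset.sum_congr rfl fun i _ => by rw [hf, Matrix.diagonal_apply_eq]
        rw [Finset.sum_filter]
        have : ∀ i, (if γ i = lam then d i i - p i i else 0)
            = d i i * (if γ i = lam then (1:ℂ) else 0)
              - p i i * (if γ i = lam then (1:ℂ) else 0) := by
          intro i; by_cases hi : γ i = lam <;> simp [hi]
        rw [Finset.sum_congr rfl fun i _ => this i, Finset.sum_sub_distrib,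
          ← hdt, ← hpt, htr, sub_self]
      calc ∑ i ∈ Finset.univ.filter (fun i => γ i = lam), γ i * (d i i - p i i)
          = ∑ i ∈ Finset.univ.filter (fun i => γ i = lam), lam * (d i i - p i i) := by
            refine Finset.sum_congr rfl fun i hi => ?_
            rw [(Finset.mem_filter.1 hi).2]
        _ = lam * ∑ i ∈ Finset.univ.filter (fun i => γ i = lam), (d i i - p i i) := by
            rw [Finset.mul_sum]
        _ = 0 := by rw [hsub, mul_zero]
    -- the linear map x ↦ diag(p x (1-p))
    set pc : Matrix (Fin n) (Fin n) ℂ := 1 - p with hpc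
    have hpcp : pc * p = 0 := by rw [hpc, sub_mul, one_mul, hp, sub_self]
    let T : Matrix (Fin n) (Fin n) ℂ →ₗ[ℂ] EuclideanSpace ℂ (Fin n) :=
      { toFun := fun x => WithLp.toLp 2 (fun i => (p * x * pc) i i)
        map_add' := fun x y => by
          ext i
          show (p * (x + y) * pc) i i = (p * x * pc) i i + (p * y * pc) i i
          rw [Matrix.mul_add, Matrix.add_mul, Matrix.add_apply]
        map_smul' := fun c x => by
          ext i
          show (p * (c • x) * pc) i i = c • ((p * x * pc) i i)
          rw [Matrix.mul_smul, Matrix.smul_mul, Matrix.smul_apply] }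
    set v : EuclideanSpace ℂ (Fin n) := WithLp.toLp 2 (fun i => d i i - p i i) with hv
    have hvmem : v ∈ LinearMap.range T := by
      rw [← Submodule.orthogonal_orthogonal (LinearMap.range T)]
      rw [Submodule.mem_orthogonal]
      intro c hc
      rw [Submodule.mem_orthogonal] at hc
      -- hc : ∀ u ∈ range T, ⟪u, c⟫ = 0
      set γ : Fin n → ℂ := fun i => (starRingEnd ℂ) (c i) with hγdef
      have hTx : ∀ x : Matrix (Fin n) (Fin n) ℂ, ∑ i, (p * x * pc) i i * γ i = 0 := by
        intro x
        have := hc (T x) (LinearMap.mem_range_self T x)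
        rw [PiLp.inner_apply] at this
        have hconj := congrArg (starRingEnd ℂ) this
        rw [map_sum, map_zero] at hconj
        rw [← hconj]
        refine Finset.sum_congr rfl fun i _ => ?_
        rw [RCLike.inner_apply', _root_.map_mul, Complex.conj_conj]
        rfl
      -- translate to a matrix statement
      set C : Matrix (Fin n) (Fin n) ℂ := Matrix.diagonal γ with hC
      have htr : ∀ x : Matrix (Fin n) (Fin n) ℂ, (x * (pc * (C * p))).trace = 0 := by
        intro x
        have h0 := hTx x
        have : (p * x * pc * C).trace = 0 := by
          rw [aux_trace_mul_isDiag _ _ (Matrix.isDiag_diagonal _)]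
          simpa [hC, Matrix.diagonal_apply_eq] using h0
        calc (x * (pc * (C * p))).trace = ((x * pc * C) * p).trace := by
              rw [mul_assoc, mul_assoc]
          _ = (p * (x * pc * C)).trace := by rw [Matrix.trace_mul_comm]
          _ = (p * x * pc * C).trace := by rw [← mul_assoc, ← mul_assoc]
          _ = 0 := this
      have hB : pc * (C * p) = 0 := by
        have := htr (pc * (C * p))ᴴ
        have h2 := aux_trace_zero (pc * (C * p)) this
        exact h2
      -- C commutes with p
      have hCp : C * p = p * (C * p) := by
        have : (1 - p) * (C * p) = 0 := by rw [← hpc]; exact hB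
        rw [sub_mul, one_mul, sub_eq_zero] at this
        exact this
      have hpCs : p * Cᴴ = p * Cᴴ * p := by
        have h' := congrArg Matrix.conjTranspose hCp
        simp only [Matrix.conjTranspose_mul, hps] at h'
        exact h'.trans (by noncomm_ring)
      have hA : p * (C * pc) = 0 := by
        have hAAH : ((p * (C * pc)) * (p * (C * pc))ᴴ).trace = 0 := by
          have hpcs : pcᴴ = pc := by
            rw [hpc, Matrix.conjTranspose_sub, hps, Matrix.conjTranspose_one]
          have hpcidem : pc * pc = pc := by
            rw [hpc, sub_mul, one_mul, mul_sub, mul_one, hp, sub_self, sub_zero]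
          have hexp : (p * (C * pc)) * (p * (C * pc))ᴴ = p * C * pc * Cᴴ * p := by
            rw [Matrix.conjTranspose_mul, Matrix.conjTranspose_mul, hpcs, hps]
            calc p * (C * pc) * (pc * Cᴴ * p) = p * C * (pc * pc) * Cᴴ * p := by noncomm_ring
              _ = p * C * pc * Cᴴ * p := by rw [hpcidem]
          rw [hexp]
          have hnormal : C * Cᴴ = Cᴴ * C := by
            rw [hC, Matrix.diagonal_conjTranspose, Matrix.diagonal_mul_diagonal,
              Matrix.diagonal_mul_diagonal]
            exact congrArg Matrix.diagonal (funext fun i => mul_comm _ _)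
          have hpc2 : pc = 1 - p := hpc
          calc (p * C * pc * Cᴴ * p).trace = (C * pc * Cᴴ * p).trace := by
                rw [show p * C * pc * Cᴴ * p = p * (C * pc * Cᴴ * p) by noncomm_ring,
                  Matrix.trace_mul_comm p (C * pc * Cᴴ * p),
                  mul_assoc (C * pc * Cᴴ) p p, hp]
            _ = (C * Cᴴ * p).trace - (C * p * Cᴴ * p).trace := by
                rw [hpc2]
                rw [show C * (1 - p) * Cᴴ * p = C * Cᴴ * p - C * p * Cᴴ * p by noncomm_ring]
                rw [Matrix.trace_sub]
            _ = (Cᴴ * C * p).trace - (C * p * Cᴴ * p).trace := by rw [hnormal]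
            _ = 0 := by
                have e1 : (C * p * Cᴴ * p).trace = (C * (p * Cᴴ)).trace := by
                  rw [show C * p * Cᴴ * p = C * (p * Cᴴ * p) by noncomm_ring, ← hpCs]
                have e2 : (Cᴴ * C * p).trace = (C * (p * Cᴴ)).trace := by
                  rw [show Cᴴ * C * p = Cᴴ * (C * p) by noncomm_ring, Matrix.trace_mul_comm,
                    show C * p * Cᴴ = C * (p * Cᴴ) by noncomm_ring]
                rw [e1, e2, sub_self]
        have := aux_trace_zero (p * (C * pc))ᴴ (by
          rwa [Matrix.conjTranspose_conjTranspose])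
        rw [← Matrix.conjTranspose_conjTranspose (p * (C * pc)), this,
          Matrix.conjTranspose_zero]
      have hcomm : C * p = p * C := by
        have h1 : p * C = p * (C * p) := by
          have : p * (C * pc) = p * C - p * (C * p) := by
            rw [hpc]; noncomm_ring
          rw [this] at hA
          rw [sub_eq_zero] at hA
          exact hA
        rw [hCp, ← h1]
      have hγc : ∀ i j, p i j ≠ 0 → γ i = γ j := by
        intro i j hpij
        have := congrFun (congrFun hcomm i) j
        rw [hC, Matrix.diagonal_mul, Matrix.mul_diagonal] at this
        rw [mul_comm (p i j) (γ j)] at this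
        exact mul_right_cancel₀ hpij this
      have := key γ hγc
      rw [PiLp.inner_apply]
      calc ∑ i, inner ℂ (c i) (v i) = ∑ i, γ i * (d i i - p i i) := by
            refine Finset.sum_congr rfl fun i _ => ?_
            rw [RCLike.inner_apply', hγdef, hv]
        _ = 0 := this
    obtain ⟨x, hx⟩ := hvmem
    refine ⟨p + p * (x * pc), ?_, ?_, ?_, ?_⟩
    · have hr1 : p * (p * (x * pc)) = p * (x * pc) := by
        rw [← mul_assoc, hp]
      have hr2 : (p * (x * pc)) * p = 0 := by
        rw [mul_assoc, mul_assoc, hpcp, mul_zero, mul_zero]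
      have hr3 : (p * (x * pc)) * (p * (x * pc)) = 0 := by
        rw [show (p * (x * pc)) * (p * (x * pc)) = ((p * (x * pc)) * p) * (x * pc) by noncomm_ring,
          hr2, zero_mul]
      rw [add_mul, mul_add, mul_add, hp, hr1, hr2, hr3, add_zero, add_zero]
    · rw [add_mul, hp, mul_assoc, mul_assoc, hpcp, mul_zero, mul_zero, add_zero]
    · rw [mul_add, hp, ← mul_assoc, hp]
    · intro i
      have hxi := congrArg (fun w : EuclideanSpace ℂ (Fin n) => w i) hx
      have : (p * x * pc) i i = d i i - p i i := hxi
      rw [Matrix.add_apply, ← mul_assoc, this]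
      ring
end
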